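/- arXiv:1809.08756 — 6 statements merged into one kernel-verified Lean document; each statement's English description precedes it below -/
import Mathlib

section
/- Let n ≥ 2k and let A₁, ..., Aₘ be families of k-element subsets of [n] that are pairwise cross-intersecting (A ∩ B ≠ ∅ for all A ∈ Aᵢ, B ∈ Aⱼ with i ≠ j). Then Σᵢ |Aᵢ| ≤ C(n,k) if m ≤ n/k, and Σᵢ |Aᵢ| ≤ m·C(n-1,k-1) if m ≥ n/k. -/
-- assume core.lean content is prepended later; for dev, re-import by textual include:

/-- Two arc-start positions `s t` (mod `n`) give intersecting `k`-arcs. -/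
def close (n k s t : ℕ) : Prop := ∃ a b, a < k ∧ b < k ∧ (s + a) % n = (t + b) % n

lemma modcase (x n : ℕ) (h0 : 0 < n) (h : x < 2*n) :
    (x < n ∧ x % n = x) ∨ (n ≤ x ∧ x % n = x - n) := by
  rcases lt_or_ge x n with h1 | h1
  · exact Or.inl ⟨h1, Nat.mod_eq_of_lt h1⟩
  · refine Or.inr ⟨h1, ?_⟩
    rw [Nat.mod_eq_sub_mod h1, Nat.mod_eq_of_lt (by omega)]

lemma close_symm {n k s t : ℕ} (h : close n k s t) : close n k t s := by
  obtain ⟨a, b, ha, hb, hab⟩ := h; exact ⟨b, a, hb, ha, hab.symm⟩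

lemma close_iff {n k s t : ℕ} (hk : 1 ≤ k) (hkn : 2*k ≤ n) (hs : s < n) (ht : t < n) :
    close n k s t ↔ ((n + s - t) % n < k ∨ (n + t - s) % n < k) := by
  have h0 : 0 < n := by omega
  constructor
  · rintro ⟨a, b, ha, hb, hab⟩
    rcases modcase (s+a) n h0 (by omega) with ⟨h1, h2⟩ | ⟨h1, h2⟩ <;>
      rcases modcase (t+b) n h0 (by omega) with ⟨h3, h4⟩ | ⟨h3, h4⟩ <;>
      rw [h2, h4] at hab <;>
      rcases modcase (n+s-t) n h0 (by omega) with ⟨h5, h6⟩ | ⟨h5, h6⟩ <;>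
      rcases modcase (n+t-s) n h0 (by omega) with ⟨h7, h8⟩ | ⟨h7, h8⟩ <;>
      rw [h6, h8] <;> omega
  · intro h
    rcases h with h | h
    · refine ⟨0, (n+s-t) % n, hk, h, ?_⟩
      rw [Nat.add_zero, Nat.mod_eq_of_lt hs, Nat.add_mod_mod]
      rcases modcase (n+s-t) n h0 (by omega) with ⟨h5, h6⟩ | ⟨h5, h6⟩ <;>
        rcases modcase (t + (n+s-t)) n h0 (by omega) with ⟨h7, h8⟩ | ⟨h7, h8⟩ <;> rw [h8] <;> omega
    · refine ⟨(n+t-s) % n, 0, h, hk, ?_⟩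
      rw [Nat.add_zero, Nat.mod_eq_of_lt ht, Nat.add_mod_mod]
      rcases modcase (n+t-s) n h0 (by omega) with ⟨h5, h6⟩ | ⟨h5, h6⟩ <;>
        rcases modcase (s + (n+t-s)) n h0 (by omega) with ⟨h7, h8⟩ | ⟨h7, h8⟩ <;> rw [h8] <;> omega

/-- arc starts at cyclic distance ≥ k are not close -/
lemma not_close_far {n k s t : ℕ} (hk : 1 ≤ k) (hkn : 2*k ≤ n) (hs : s < n) (ht : t < n)
    (h1 : k ≤ (n + s - t) % n) (h2 : k ≤ (n + t - s) % n) : ¬ close n k s t := by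
  rw [close_iff hk hkn hs ht]; omega

/-- x and (x+k) % n are not close (needs 2k ≤ n). -/
lemma not_close_add_k {n k x : ℕ} (hk : 1 ≤ k) (hkn : 2*k ≤ n) (hx : x < n) :
    ¬ close n k x ((x + k) % n) := by
  have h0 : 0 < n := by omega
  rcases modcase (x+k) n h0 (by omega) with ⟨h1, h2⟩ | ⟨h1, h2⟩ <;>
    refine not_close_far hk hkn hx (by omega) ?_ ?_ <;> rw [h2] <;>
    [skip; skip; skip; skip] <;>
    first
    | (rcases modcase (n + x - (x+k)) n h0 (by omega) with ⟨h5, h6⟩ | ⟨h5, h6⟩ <;> rw [h6] <;> omega)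
    | (rcases modcase (n + (x+k) - x) n h0 (by omega) with ⟨h5, h6⟩ | ⟨h5, h6⟩ <;> rw [h6] <;> omega)
    | (rcases modcase (n + x - (x+k-n)) n h0 (by omega) with ⟨h5, h6⟩ | ⟨h5, h6⟩ <;> rw [h6] <;> omega)
    | (rcases modcase (n + (x+k-n) - x) n h0 (by omega) with ⟨h5, h6⟩ | ⟨h5, h6⟩ <;> rw [h6] <;> omega)

/-- x and (x+k+1) % n are not close (needs 2k+1 ≤ n). -/
lemma not_close_add_k1 {n k x : ℕ} (hk : 1 ≤ k) (hkn : 2*k + 1 ≤ n) (hx : x < n) :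
    ¬ close n k x ((x + (k+1)) % n) := by
  have h0 : 0 < n := by omega
  rcases modcase (x+(k+1)) n h0 (by omega) with ⟨h1, h2⟩ | ⟨h1, h2⟩ <;>
    refine not_close_far hk (by omega) hx (by omega) ?_ ?_ <;> rw [h2] <;>
    first
    | (rcases modcase (n + x - (x+(k+1))) n h0 (by omega) with ⟨h5, h6⟩ | ⟨h5, h6⟩ <;> rw [h6] <;> omega)
    | (rcases modcase (n + (x+(k+1)) - x) n h0 (by omega) with ⟨h5, h6⟩ | ⟨h5, h6⟩ <;> rw [h6] <;> omega)
    | (rcases modcase (n + x - (x+(k+1)-n)) n h0 (by omega) with ⟨h5, h6⟩ | ⟨h5, h6⟩ <;> rw [h6] <;> omega)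
    | (rcases modcase (n + (x+(k+1)-n) - x) n h0 (by omega) with ⟨h5, h6⟩ | ⟨h5, h6⟩ <;> rw [h6] <;> omega)

lemma close_delete {n k s t z fs ft : ℕ} (hk : 1 ≤ k) (hkn : 2*k+1 ≤ n)
    (hs : s < n) (ht : t < n) (hz : z < n)
    (hfs : (s < z ∧ fs = s) ∨ (z < s ∧ fs = s - 1))
    (hft : (t < z ∧ ft = t) ∨ (z < t ∧ ft = t - 1))
    (h : close n k s t) : close (n-1) k fs ft := by
  have h0 : 0 < n := by omega
  rw [close_iff hk (by omega) hs ht] at h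
  rw [close_iff hk (by omega) (n := n-1) (by omega) (by omega)]
  rcases modcase (n+s-t) n h0 (by omega) with ⟨h1, h2⟩ | ⟨h1, h2⟩ <;>
    rcases modcase (n+t-s) n h0 (by omega) with ⟨h3, h4⟩ | ⟨h3, h4⟩ <;>
    rw [h2, h4] at h <;>
    rcases modcase (n-1+fs-ft) (n-1) (by omega) (by omega) with ⟨h5, h6⟩ | ⟨h5, h6⟩ <;>
    rcases modcase (n-1+ft-fs) (n-1) (by omega) (by omega) with ⟨h7, h8⟩ | ⟨h7, h8⟩ <;>
    rw [h6, h8] <;> omega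

lemma card_inter_pair (S : Finset ℕ) (x y : ℕ) (hxy : x ≠ y) :
    (S ∩ {x, y}).card ≤ (if x ∈ S then 1 else 0) + (if y ∈ S then 1 else 0) := by
  have hsub : ∀ a ∈ S ∩ {x, y}, a = x ∨ a = y := by
    intro a ha; simp only [Finset.mem_inter, Finset.mem_insert, Finset.mem_singleton] at ha
    tauto
  split_ifs with h1 h2 h2
  · calc (S ∩ {x,y}).card ≤ ({x,y} : Finset ℕ).card := Finset.card_le_card Finset.inter_subset_right
      _ = 2 := by rw [Finset.card_insert_of_notMem (by simp [hxy]), Finset.card_singleton]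
  · refine le_trans (Finset.card_le_card (t := {x}) ?_) (by simp)
    intro a ha
    have := hsub a ha
    have ha' := (Finset.mem_inter.mp ha).1
    simp only [Finset.mem_singleton]
    rcases this with rfl | rfl
    · rfl
    · exact absurd ha' h2
  · refine le_trans (Finset.card_le_card (t := {y}) ?_) (by simp)
    intro a ha
    have := hsub a ha
    have ha' := (Finset.mem_inter.mp ha).1
    simp only [Finset.mem_singleton]
    rcases this with rfl | rfl
    · exact absurd ha' h1
    · rfl
  · simp only [Nat.add_zero, Nat.le_zero, Finset.card_eq_zero]
    rw [Finset.eq_empty_iff_forall_notMem]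
    intro a ha
    have := hsub a ha
    have ha' := (Finset.mem_inter.mp ha).1
    rcases this with rfl | rfl
    · exact h1 ha'
    · exact h2 ha'

lemma two_family (n : ℕ) : ∀ (k : ℕ) (S T : Finset ℕ), 1 ≤ k → 2*k ≤ n →
    (∀ s ∈ S, s < n) → (∀ t ∈ T, t < n) → S.Nonempty → T.Nonempty →
    (∀ s ∈ S, ∀ t ∈ T, close n k s t) → S.card + T.card ≤ 2*k := by
  induction n using Nat.strong_induction_on with
  | _ n IH =>
  intro k S T hk hkn hSn hTn hSne hTne hcl
  rcases eq_or_lt_of_le hkn with heq | hlt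
  · -- base case n = 2k : antipodal pairing
    have hpair : ∀ x, x < k → (S ∩ {x, x+k}).card + (T ∩ {x, x+k}).card ≤ 2 := by
      intro x hx
      have hxn : x < n := by omega
      have hxkn : x + k < n := by omega
      have hmod : (x + k) % n = x + k := Nat.mod_eq_of_lt hxkn
      have hx1 : ¬(x ∈ S ∧ x + k ∈ T) := by
        rintro ⟨a, b⟩
        have := hcl x a (x+k) b
        have h2 := not_close_add_k hk hkn hxn
        rw [hmod] at h2
        exact h2 this
      have hx2 : ¬(x + k ∈ S ∧ x ∈ T) := by
        rintro ⟨a, b⟩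
        have := close_symm (hcl (x+k) a x b)
        have h2 := not_close_add_k hk hkn hxn
        rw [hmod] at h2
        exact h2 this
      have cS := card_inter_pair S x (x+k) (by omega)
      have cT := card_inter_pair T x (x+k) (by omega)
      split_ifs at cS cT <;>
        first
        | (exact absurd ⟨‹x ∈ S›, ‹x + k ∈ T›⟩ hx1)
        | (exact absurd ⟨‹x + k ∈ S›, ‹x ∈ T›⟩ hx2)
        | omega
    have hdisjP : ∀ x ∈ Finset.range k, ∀ y ∈ Finset.range k, x ≠ y →
        Disjoint (({x, x+k} : Finset ℕ)) ({y, y+k} : Finset ℕ) := by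
      intro x hx y hy hxy
      simp only [Finset.mem_range] at hx hy
      rw [Finset.disjoint_left]
      intro a ha hb
      simp only [Finset.mem_insert, Finset.mem_singleton] at ha hb
      omega
    have hScov : S = (Finset.range k).biUnion (fun x => S ∩ {x, x+k}) := by
      ext s
      simp only [Finset.mem_biUnion, Finset.mem_range, Finset.mem_inter, Finset.mem_insert,
        Finset.mem_singleton]
      constructor
      · intro hs
        have := hSn s hs
        by_cases h : s < k
        · exact ⟨s, by omega, hs, by omega⟩
        · exact ⟨s - k, by omega, hs, by omega⟩
      · rintro ⟨x, _, hs, _⟩; exact hs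
    have hTcov : T = (Finset.range k).biUnion (fun x => T ∩ {x, x+k}) := by
      ext t
      simp only [Finset.mem_biUnion, Finset.mem_range, Finset.mem_inter, Finset.mem_insert,
        Finset.mem_singleton]
      constructor
      · intro ht
        have := hTn t ht
        by_cases h : t < k
        · exact ⟨t, by omega, ht, by omega⟩
        · exact ⟨t - k, by omega, ht, by omega⟩
      · rintro ⟨x, _, ht, _⟩; exact ht
    have hcardS : S.card = ∑ x ∈ Finset.range k, (S ∩ {x, x+k}).card := by
      conv_lhs => rw [hScov]
      exact Finset.card_biUnion (fun x hx y hy hxy =>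
        Finset.disjoint_of_subset_left Finset.inter_subset_right
          (Finset.disjoint_of_subset_right Finset.inter_subset_right (hdisjP x hx y hy hxy)))
    have hcardT : T.card = ∑ x ∈ Finset.range k, (T ∩ {x, x+k}).card := by
      conv_lhs => rw [hTcov]
      exact Finset.card_biUnion (fun x hx y hy hxy =>
        Finset.disjoint_of_subset_left Finset.inter_subset_right
          (Finset.disjoint_of_subset_right Finset.inter_subset_right (hdisjP x hx y hy hxy)))
    calc S.card + T.card
        = ∑ x ∈ Finset.range k, ((S ∩ {x, x+k}).card + (T ∩ {x, x+k}).card) := by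
          rw [hcardS, hcardT, Finset.sum_add_distrib]
      _ ≤ ∑ _x ∈ Finset.range k, 2 := Finset.sum_le_sum (fun x hx =>
          hpair x (Finset.mem_range.mp hx))
      _ = 2*k := by simp [Nat.mul_comm]
  · -- n > 2k
    by_cases hfull : ∀ z, z < n → z ∈ S ∨ z ∈ T
    · -- derive contradiction
      exfalso
      have h0 : 0 < n := by omega
      have hdisj : ∀ x, x ∈ S → x ∈ T → False := by
        intro x hxS hxT
        have hxn := hSn x hxS
        have hyn : (x+k) % n < n := Nat.mod_lt _ h0
        rcases hfull _ hyn with hyS | hyT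
        · exact not_close_add_k hk hkn hxn (close_symm (hcl _ hyS _ hxT))
        · exact not_close_add_k hk hkn hxn (hcl _ hxS _ hyT)
      have hSk : ∀ x ∈ S, (x+k) % n ∈ S := by
        intro x hx
        have hyn : (x+k) % n < n := Nat.mod_lt _ h0
        rcases hfull _ hyn with hyS | hyT
        · exact hyS
        · exact absurd (hcl _ hx _ hyT) (not_close_add_k hk hkn (hSn x hx))
      have hSk1 : ∀ x ∈ S, (x+(k+1)) % n ∈ S := by
        intro x hx
        have hyn : (x+(k+1)) % n < n := Nat.mod_lt _ h0
        rcases hfull _ hyn with hyS | hyT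
        · exact hyS
        · exact absurd (hcl _ hx _ hyT) (not_close_add_k1 hk (by omega) (hSn x hx))
      have hSjk : ∀ j, ∀ x ∈ S, (x + j*k) % n ∈ S := by
        intro j
        induction j with
        | zero => intro x hx; simpa [Nat.mod_eq_of_lt (hSn x hx)] using hx
        | succ j ihj =>
          intro x hx
          have h1 := hSk _ (ihj x hx)
          have e : ((x + j*k) % n + k) % n = (x + (j+1)*k) % n := by
            rw [Nat.mod_add_mod, Nat.add_assoc, ← Nat.succ_mul]
          rwa [e] at h1
      have hS1 : ∀ x ∈ S, (x+1) % n ∈ S := by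
        intro x hx
        have h2 := hSjk (n-1) _ (hSk1 x hx)
        have hq : (n-1)*k + k = k*n := by
          cases n with
          | zero => omega
          | succ n' => simp only [Nat.succ_sub_one]; ring
        have e : ((x+(k+1)) % n + (n-1)*k) % n = (x+1) % n := by
          rw [Nat.mod_add_mod]
          have e2 : x+(k+1) + (n-1)*k = x + 1 + k*n := by
            rw [← hq]; generalize (n-1)*k = q; omega
          rw [e2, Nat.add_mul_mod_self_right]
        rwa [e] at h2
      have hSj : ∀ j, ∀ x ∈ S, (x + j) % n ∈ S := by
        intro j
        induction j with
        | zero => intro x hx; simpa [Nat.mod_eq_of_lt (hSn x hx)] using hx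
        | succ j ihj =>
          intro x hx
          have h1 := hS1 _ (ihj x hx)
          rwa [Nat.mod_add_mod, Nat.add_assoc] at h1
      obtain ⟨x, hx⟩ := hSne
      obtain ⟨t, ht⟩ := hTne
      have htn := hTn t ht
      have hxn := hSn x hx
      have h2 := hSj ((n + t - x) % n) x hx
      have e : (x + (n + t - x) % n) % n = t := by
        rw [Nat.add_mod_mod]
        have e2 : x + (n + t - x) = n + t := by omega
        rw [e2, Nat.add_mod_left, Nat.mod_eq_of_lt htn]
      rw [e] at h2
      exact hdisj t h2 ht
    · -- delete a free point z and induct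
      push_neg at hfull
      obtain ⟨z, hzn, hzS, hzT⟩ := hfull
      set f : ℕ → ℕ := fun w => if w < z then w else w - 1 with hf
      have hinj : ∀ (U : Finset ℕ), (∀ u ∈ U, u < n) → z ∉ U →
          Set.InjOn f ↑U := by
        intro U hUn hzU a ha b hb hab
        simp only [Finset.coe_sort_coe, Finset.mem_coe] at ha hb
        have ha' := hUn a ha
        have hb' := hUn b hb
        have haz : a ≠ z := fun h => hzU (h ▸ ha)
        have hbz : b ≠ z := fun h => hzU (h ▸ hb)
        simp only [hf] at hab
        split_ifs at hab <;> omega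
      have hmem : ∀ (U : Finset ℕ), (∀ u ∈ U, u < n) → z ∉ U →
          ∀ u' ∈ U.image f, u' < n - 1 := by
        intro U hUn hzU u' hu'
        obtain ⟨u, hu, rfl⟩ := Finset.mem_image.mp hu'
        have := hUn u hu
        have : u ≠ z := fun h => hzU (h ▸ hu)
        simp only [hf]
        split_ifs <;> omega
      have hcl' : ∀ s' ∈ S.image f, ∀ t' ∈ T.image f, close (n-1) k s' t' := by
        intro s' hs' t' ht'
        obtain ⟨s, hs, rfl⟩ := Finset.mem_image.mp hs'
        obtain ⟨t, ht, rfl⟩ := Finset.mem_image.mp ht'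
        have hsz : s ≠ z := fun h => hzS (h ▸ hs)
        have htz : t ≠ z := fun h => hzT (h ▸ ht)
        refine close_delete hk (by omega) (hSn s hs) (hTn t ht) hzn ?_ ?_ (hcl s hs t ht)
        · by_cases h : s < z
          · exact Or.inl ⟨h, by simp [hf, h]⟩
          · exact Or.inr ⟨by omega, by simp [hf, h]⟩
        · by_cases h : t < z
          · exact Or.inl ⟨h, by simp [hf, h]⟩
          · exact Or.inr ⟨by omega, by simp [hf, h]⟩
      have hres := IH (n-1) (by omega) k (S.image f) (T.image f) hk (by omega)
        (hmem S hSn hzS) (hmem T hTn hzT) (hSne.image f) (hTne.image f) hcl'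
      rwa [Finset.card_image_of_injOn (hinj S hSn hzS),
        Finset.card_image_of_injOn (hinj T hTn hzT)] at hres
lemma avg {ι : Type*} [DecidableEq ι] (k : ℕ) (N : Finset ι) (c : ι → ℕ) (h2 : 2 ≤ N.card)
    (hpair : ∀ i ∈ N, ∀ j ∈ N, i ≠ j → c i + c j ≤ 2*k) :
    ∑ i ∈ N, c i ≤ N.card * k := by
  set u := N.card with hu
  set St := ∑ i ∈ N, c i with hS
  have key : ∀ i ∈ N, St + (u - 1) * c i ≤ (u-1) * (2*k) + c i := by
    intro i hi
    have e1 : ∑ j ∈ N.erase i, (c j + c i) ≤ ∑ _j ∈ N.erase i, 2*k :=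
      Finset.sum_le_sum (fun j hj =>
        hpair j (Finset.mem_of_mem_erase hj) i hi (Finset.ne_of_mem_erase hj))
    rw [Finset.sum_add_distrib, Finset.sum_const, Finset.sum_const,
      Finset.card_erase_of_mem hi, smul_eq_mul, smul_eq_mul] at e1
    have e2 : c i + ∑ j ∈ N.erase i, c j = St := Finset.add_sum_erase N c hi
    rw [← hu] at e1
    generalize (u-1) * c i = A at e1 ⊢
    generalize (u-1) * (2*k) = B at e1 ⊢
    omega
  have keysum := Finset.sum_le_sum key
  rw [Finset.sum_add_distrib, Finset.sum_add_distrib, Finset.sum_const, ← hu, smul_eq_mul,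
    Finset.sum_const, ← hu, smul_eq_mul, ← Finset.mul_sum, ← hS] at keysum
  -- keysum : u * St + (u-1) * St ≤ u * ((u-1)*(2*k)) + St
  have hposS : St ≤ u * St := Nat.le_mul_of_pos_left _ (by omega)
  have e3 : u * St = St + (u-1) * St := by rw [Nat.sub_one_mul]; omega
  have e4 : u * ((u-1)*(2*k)) = 2 * ((u-1) * (u * k)) := by ring
  rw [e3, e4] at keysum
  have e5 : 2 * ((u-1) * St) ≤ 2 * ((u-1) * (u*k)) := by
    generalize (u-1)*St = A at keysum ⊢
    generalize (u-1)*(u*k) = B at keysum ⊢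
    omega
  exact Nat.le_of_mul_le_mul_left (Nat.le_of_mul_le_mul_left e5 (by omega)) (by omega)

lemma multi {n k m : ℕ} (hk : 1 ≤ k) (hkn : 2*k ≤ n) (S : Fin m → Finset ℕ)
    (hSn : ∀ i, ∀ s ∈ S i, s < n)
    (hcross : ∀ i j, i ≠ j → ∀ s ∈ S i, ∀ t ∈ S j, close n k s t) :
    ∑ i, (S i).card ≤ max n (m*k) := by
  classical
  set N := Finset.univ.filter (fun i : Fin m => (S i).Nonempty) with hN
  have hsplit : ∑ i, (S i).card = ∑ i ∈ N, (S i).card := by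
    rw [← Finset.sum_filter_add_sum_filter_not Finset.univ (fun i => (S i).Nonempty)
      (fun i => (S i).card)]
    have hz : ∑ i ∈ Finset.univ.filter (fun i : Fin m => ¬ (S i).Nonempty), (S i).card = 0 := by
      refine Finset.sum_eq_zero fun i hi => ?_
      simp only [Finset.mem_filter, Finset.not_nonempty_iff_eq_empty] at hi
      simp [hi.2]
    rw [hz, ← hN]
    omega
  rcases le_or_gt N.card 1 with h1 | h1
  · refine le_trans ?_ (le_max_left _ _)
    rw [hsplit]
    rcases N.eq_empty_or_nonempty with he | hne
    · simp [he]
    · have : N.card = 1 := le_antisymm h1 (Finset.Nonempty.card_pos hne)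
      obtain ⟨i, hi⟩ := Finset.card_eq_one.mp this
      rw [hi, Finset.sum_singleton]
      calc (S i).card ≤ (Finset.range n).card :=
            Finset.card_le_card (fun s hs => Finset.mem_range.mpr (hSn i s hs))
        _ = n := Finset.card_range n
  · refine le_trans ?_ (le_max_right _ _)
    rw [hsplit]
    have hpair : ∀ i ∈ N, ∀ j ∈ N, i ≠ j → (S i).card + (S j).card ≤ 2*k := by
      intro i hi j hj hij
      simp only [hN, Finset.mem_filter] at hi hj
      exact two_family n k (S i) (S j) hk hkn (hSn i) (hSn j) hi.2 hj.2 (hcross i j hij)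
    calc ∑ i ∈ N, (S i).card ≤ N.card * k := avg k N _ h1 hpair
      _ ≤ m * k := Nat.mul_le_mul_right k (le_trans (Finset.card_filter_le _ _) (by simp))

section geom
variable {n k : ℕ} [NeZero n]

/-- the `k`-arc starting at `t` in `ZMod n` -/
def win (n k : ℕ) [NeZero n] (t : ZMod n) : Finset (ZMod n) :=
  (Finset.range k).image (fun j : ℕ => t + (j : ZMod n))

lemma card_win (hkn : k ≤ n) (t : ZMod n) : (win n k t).card = k := by
  rw [win, Finset.card_image_of_injOn, Finset.card_range]
  intro a ha b hb hab
  simp only [Finset.coe_range, Set.mem_Iio] at ha hb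
  have : ((a : ZMod n)) = b := by
    have := add_left_cancel hab
    exact this
  have h1 : (a : ZMod n).val = (b : ZMod n).val := by rw [this]
  rwa [ZMod.val_natCast_of_lt (by omega), ZMod.val_natCast_of_lt (by omega)] at h1

lemma win_inter_close (hk : 1 ≤ k) (hkn : 2*k ≤ n) {t t' : ZMod n}
    (h : (win n k t ∩ win n k t').Nonempty) : close n k t.val t'.val := by
  obtain ⟨x, hx⟩ := h
  rw [Finset.mem_inter, win, win] at hx
  obtain ⟨hx1, hx2⟩ := hx
  obtain ⟨a, ha, hax⟩ := Finset.mem_image.mp hx1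
  obtain ⟨b, hb, hbx⟩ := Finset.mem_image.mp hx2
  refine ⟨a, b, Finset.mem_range.mp ha, Finset.mem_range.mp hb, ?_⟩
  have : t + (a : ZMod n) = t' + (b : ZMod n) := by rw [hax, hbx]
  have hval : (t + (a : ZMod n)).val = (t' + (b : ZMod n)).val := by rw [this]
  rwa [ZMod.val_add, ZMod.val_add, ZMod.val_natCast, ZMod.val_natCast,
    Nat.add_mod_mod, Nat.add_mod_mod] at hval

/-- the image of an arc under a circular arrangement -/
def arc (σ : ZMod n ≃ Fin n) (k : ℕ) (t : ZMod n) : Finset (Fin n) :=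
  (win n k t).image σ

lemma arc_inter (σ : ZMod n ≃ Fin n) {t t' : ZMod n}
    (h : (arc σ k t ∩ arc σ k t').Nonempty) : (win n k t ∩ win n k t').Nonempty := by
  obtain ⟨x, hx⟩ := h
  rw [Finset.mem_inter, arc, arc] at hx
  obtain ⟨a, ha, hax⟩ := Finset.mem_image.mp hx.1
  obtain ⟨b, hb, hbx⟩ := Finset.mem_image.mp hx.2
  have : a = b := σ.injective (by rw [hax, hbx])
  exact ⟨a, Finset.mem_inter.mpr ⟨ha, this ▸ hb⟩⟩

open Finset in
/-- at least `k! (n-k)!` arrangements place the arc at `t` onto a given `k`-set `A`. -/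
lemma count_arr (hk : 1 ≤ k) (hkn : k ≤ n) (t : ZMod n) (A : Finset (Fin n)) (hA : A.card = k) :
    k.factorial * (n-k).factorial ≤
      (Finset.univ.filter (fun σ : ZMod n ≃ Fin n => arc σ k t = A)).card := by
  classical
  set W := win n k t with hW
  have hWc : W.card = k := card_win hkn t
  set p : ZMod n → Prop := fun x => x ∈ W with hp
  set q : Fin n → Prop := fun y => y ∈ A with hq
  let E := ({ x // p x } ≃ { y // q y }) × ({ x // ¬ p x } ≃ { y // ¬ q y })
  have hcard1 : Fintype.card { x // p x } = k := by
    simp only [hp]; rw [Fintype.card_coe]; exact hWc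
  have hcard2 : Fintype.card { y // q y } = k := by
    simp only [hq]; rw [Fintype.card_coe]; exact hA
  have hcard3 : Fintype.card { x // ¬ p x } = n - k := by
    rw [Fintype.card_subtype_compl, hcard1, ZMod.card]
  have hcard4 : Fintype.card { y // ¬ q y } = n - k := by
    rw [Fintype.card_subtype_compl, hcard2, Fintype.card_fin]
  have hE : Fintype.card E = k.factorial * (n-k).factorial := by
    rw [Fintype.card_prod,
      Fintype.card_equiv (Fintype.equivOfCardEq (hcard1.trans hcard2.symm)),
      Fintype.card_equiv (Fintype.equivOfCardEq (hcard3.trans hcard4.symm)), hcard1, hcard3]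
  let Φ : E → (ZMod n ≃ Fin n) := fun e =>
    (Equiv.sumCompl p).symm.trans ((e.1.sumCongr e.2).trans (Equiv.sumCompl q))
  have hΦpos : ∀ (e : E) (x : ZMod n) (h : p x), Φ e x = ↑(e.1 ⟨x, h⟩) := by
    intro e x h
    simp only [Φ, Equiv.trans_apply, Equiv.sumCompl_symm_apply_of_pos h,
      Equiv.sumCongr_apply, Sum.map_inl, Equiv.sumCompl_apply_inl]
  have hΦneg : ∀ (e : E) (x : ZMod n) (h : ¬ p x), Φ e x = ↑(e.2 ⟨x, h⟩) := by
    intro e x h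
    simp only [Φ, Equiv.trans_apply, Equiv.sumCompl_symm_apply_of_neg h,
      Equiv.sumCongr_apply, Sum.map_inr, Equiv.sumCompl_apply_inr]
  have hmaps : ∀ e : E, Φ e ∈ Finset.univ.filter (fun σ : ZMod n ≃ Fin n => arc σ k t = A) := by
    intro e
    rw [Finset.mem_filter]
    refine ⟨Finset.mem_univ _, ?_⟩
    have hsub : W.image (Φ e) ⊆ A := by
      intro y hy
      obtain ⟨x, hx, rfl⟩ := Finset.mem_image.mp hy
      rw [hΦpos e x hx]
      exact (e.1 ⟨x, hx⟩).2
    have hcard : (W.image (Φ e)).card = A.card := by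
      rw [Finset.card_image_of_injective _ (Φ e).injective, hWc, hA]
    exact Finset.eq_of_subset_of_card_le hsub (le_of_eq hcard.symm)
  have hinj : Set.InjOn Φ ↑(Finset.univ : Finset E) := by
    intro e he f hf hef
    ext1
    · apply Equiv.ext
      intro x
      apply Subtype.ext
      have h1 : Φ e x.1 = ↑(e.1 x) := by simpa using hΦpos e x.1 x.2
      have h2 : Φ f x.1 = ↑(f.1 x) := by simpa using hΦpos f x.1 x.2
      rw [← h1, ← h2, hef]
    · apply Equiv.ext
      intro x
      apply Subtype.ext
      have h1 : Φ e x.1 = ↑(e.2 x) := by simpa using hΦneg e x.1 x.2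
      have h2 : Φ f x.1 = ↑(f.2 x) := by simpa using hΦneg f x.1 x.2
      rw [← h1, ← h2, hef]
  calc k.factorial * (n-k).factorial = Fintype.card E := hE.symm
    _ = (Finset.univ : Finset E).card := (Finset.card_univ).symm
    _ ≤ _ := Finset.card_le_card_of_injOn Φ (fun e _ => hmaps e) hinj

end geom

section main
open Finset

theorem stmt1 (n k m : ℕ) (hk : 1 ≤ k) (hnk : 2 * k ≤ n)
    (A : Fin m → Finset (Finset (Fin n)))
    (huniform : ∀ i, ∀ a ∈ A i, a.card = k)
    (hcross : ∀ i j : Fin m, i ≠ j → ∀ a ∈ A i, ∀ b ∈ A j, (a ∩ b).Nonempty) :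
    ((m : ℚ) ≤ (n : ℚ) / (k : ℚ) → ∑ i, (A i).card ≤ n.choose k) ∧
    ((n : ℚ) / (k : ℚ) ≤ (m : ℚ) → ∑ i, (A i).card ≤ m * (n - 1).choose (k - 1)) := by
  classical
  haveI : NeZero n := ⟨by omega⟩
  have hkn : k ≤ n := by omega
  set K := k.factorial * (n-k).factorial with hK
  set F := ∑ i, (A i).card with hF
  -- the master double-counting inequality
  have master : F * (K * n) ≤ n.factorial * max n (m*k) := by
    set N := ∑ i : Fin m, ∑ t : ZMod n, ∑ σ : ZMod n ≃ Fin n,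
      (if arc σ k t ∈ A i then 1 else 0) with hN
    have lower : F * (K * n) ≤ N := by
      rw [hF, Finset.sum_mul, hN]
      refine Finset.sum_le_sum fun i _ => ?_
      have inner : ∀ t : ZMod n, (A i).card * K ≤
          ∑ σ : ZMod n ≃ Fin n, (if arc σ k t ∈ A i then 1 else 0) := by
        intro t
        rw [← Finset.card_filter]
        calc (A i).card * K = ∑ _B ∈ A i, K := by rw [Finset.sum_const, smul_eq_mul]
          _ ≤ ∑ B ∈ A i, (Finset.univ.filter (fun σ : ZMod n ≃ Fin n => arc σ k t = B)).card :=
            Finset.sum_le_sum (fun B hB => count_arr hk hkn t B (huniform i B hB))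
          _ = ((A i).biUnion (fun B =>
              Finset.univ.filter (fun σ : ZMod n ≃ Fin n => arc σ k t = B))).card := by
            rw [Finset.card_biUnion]
            intro B hB C hC hBC
            simp only [Function.onFun]; rw [Finset.disjoint_left]
            intro σ hσB hσC
            rw [Finset.mem_filter] at hσB hσC
            exact hBC (hσB.2 ▸ hσC.2)
          _ ≤ (Finset.univ.filter (fun σ : ZMod n ≃ Fin n => arc σ k t ∈ A i)).card := by
            refine Finset.card_le_card ?_
            intro σ hσ
            rw [Finset.mem_biUnion] at hσ
            obtain ⟨B, hB, hσB⟩ := hσ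
            rw [Finset.mem_filter] at hσB ⊢
            exact ⟨hσB.1, hσB.2 ▸ hB⟩
      calc (A i).card * (K * n)
          = ∑ _t : ZMod n, (A i).card * K := by
            rw [Finset.sum_const, Finset.card_univ, ZMod.card, smul_eq_mul]; ring
        _ ≤ ∑ t : ZMod n, ∑ σ : ZMod n ≃ Fin n, (if arc σ k t ∈ A i then 1 else 0) :=
            Finset.sum_le_sum (fun t _ => inner t)
    have upper : N ≤ n.factorial * max n (m*k) := by
      have hswap : N = ∑ σ : ZMod n ≃ Fin n, ∑ i : Fin m, ∑ t : ZMod n,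
          (if arc σ k t ∈ A i then 1 else 0) := by
        rw [hN]
        rw [show (∑ i : Fin m, ∑ t : ZMod n, ∑ σ : ZMod n ≃ Fin n,
            (if arc σ k t ∈ A i then 1 else 0)) = ∑ i : Fin m, ∑ σ : ZMod n ≃ Fin n,
            ∑ t : ZMod n, (if arc σ k t ∈ A i then 1 else 0) from
          Finset.sum_congr rfl (fun i _ => Finset.sum_comm)]
        exact Finset.sum_comm
      rw [hswap]
      have perσ : ∀ σ : ZMod n ≃ Fin n,
          (∑ i : Fin m, ∑ t : ZMod n, (if arc σ k t ∈ A i then 1 else 0)) ≤ max n (m*k) := by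
        intro σ
        have card_eq : ∀ i : Fin m, (∑ t : ZMod n, (if arc σ k t ∈ A i then 1 else 0)) =
            (((Finset.univ.filter (fun t : ZMod n => arc σ k t ∈ A i))).image ZMod.val).card := by
          intro i
          rw [Finset.card_image_of_injOn ((ZMod.val_injective n).injOn),
            Finset.card_filter]
        calc (∑ i : Fin m, ∑ t : ZMod n, (if arc σ k t ∈ A i then 1 else 0))
            = ∑ i : Fin m,
              (((Finset.univ.filter (fun t : ZMod n => arc σ k t ∈ A i))).image ZMod.val).card :=
              Finset.sum_congr rfl (fun i _ => card_eq i)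
          _ ≤ max n (m*k) := by
              refine multi hk hnk _ ?_ ?_
              · intro i s hs
                obtain ⟨u, _, rfl⟩ := Finset.mem_image.mp hs
                exact ZMod.val_lt u
              · intro i j hij s hs t ht
                obtain ⟨u, hu, rfl⟩ := Finset.mem_image.mp hs
                obtain ⟨v, hv, rfl⟩ := Finset.mem_image.mp ht
                rw [Finset.mem_filter] at hu hv
                refine win_inter_close hk hnk (arc_inter σ ?_)
                exact hcross i j hij _ hu.2 _ hv.2
      calc (∑ σ : ZMod n ≃ Fin n, ∑ i : Fin m, ∑ t : ZMod n,
            (if arc σ k t ∈ A i then 1 else 0))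
          ≤ ∑ _σ : ZMod n ≃ Fin n, max n (m*k) := Finset.sum_le_sum (fun σ _ => perσ σ)
        _ = n.factorial * max n (m*k) := by
            rw [Finset.sum_const, Finset.card_univ, smul_eq_mul,
              Fintype.card_equiv (Fintype.equivOfCardEq (by rw [ZMod.card, Fintype.card_fin])),
              ZMod.card]
    exact le_trans lower upper
  have hn0 : 0 < n := by omega
  constructor
  · intro hle
    have hmk : m * k ≤ n := by
      have h1 : (m:ℚ) * k ≤ n := by
        rwa [le_div_iff₀ (by exact_mod_cast hk)] at hle
      exact_mod_cast h1
    rw [max_eq_left hmk] at master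
    -- F * (K * n) ≤ n! * n  ⇒  F * K ≤ n!
    have h2 : F * K * n ≤ n.factorial * n := by
      calc F * K * n = F * (K * n) := by ring
        _ ≤ n.factorial * n := master
    have h3 : F * K ≤ n.factorial := Nat.le_of_mul_le_mul_right h2 hn0
    have h4 : n.factorial = n.choose k * K := by
      rw [hK, ← Nat.mul_assoc]
      exact (Nat.choose_mul_factorial_mul_factorial hkn).symm
    rw [h4] at h3
    have hK0 : 0 < K := by
      rw [hK]; exact Nat.mul_pos (Nat.factorial_pos _) (Nat.factorial_pos _)
    exact Nat.le_of_mul_le_mul_right h3 hK0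
  · intro hle
    have hmk : n ≤ m * k := by
      have h1 : (n:ℚ) ≤ m * k := by
        rw [div_le_iff₀ (by exact_mod_cast hk)] at hle
        exact hle
      exact_mod_cast h1
    rw [max_eq_right hmk] at master
    -- F * (K * n) ≤ n! * (m*k) = n * (n-1)! * m * k
    have hfact : n.factorial = n * (n-1).factorial := by
      rw [← Nat.mul_factorial_pred hn0.ne']
    have h2 : F * K * n ≤ ((n-1).factorial * (m * k)) * n := by
      calc F * K * n = F * (K * n) := by ring
        _ ≤ n.factorial * (m*k) := master
        _ = ((n-1).factorial * (m * k)) * n := by rw [hfact]; ring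
    have h3 : F * K ≤ (n-1).factorial * (m * k) := Nat.le_of_mul_le_mul_right h2 hn0
    -- K = k * ((k-1)! * (n-k)!)
    have hKk : K = k * ((k-1).factorial * (n-k).factorial) := by
      rw [hK, ← Nat.mul_assoc, Nat.mul_factorial_pred (by omega)]
    have h4 : (F * ((k-1).factorial * (n-k).factorial)) * k ≤
        ((n-1).factorial * m) * k := by
      calc (F * ((k-1).factorial * (n-k).factorial)) * k = F * K := by rw [hKk]; ring
        _ ≤ (n-1).factorial * (m * k) := h3
        _ = ((n-1).factorial * m) * k := by ring
    have h5 : F * ((k-1).factorial * (n-k).factorial) ≤ (n-1).factorial * m :=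
      Nat.le_of_mul_le_mul_right h4 (by omega)
    have h6 : (n-1).factorial = (n-1).choose (k-1) * ((k-1).factorial * (n-k).factorial) := by
      have e : (n-1) - (k-1) = n - k := by omega
      rw [← Nat.mul_assoc, ← e]
      exact (Nat.choose_mul_factorial_mul_factorial (by omega)).symm
    rw [h6] at h5
    have hpos : 0 < (k-1).factorial * (n-k).factorial :=
      Nat.mul_pos (Nat.factorial_pos _) (Nat.factorial_pos _)
    have h7 : F ≤ (n-1).choose (k-1) * m := by
      refine Nat.le_of_mul_le_mul_right ?_ hpos
      calc F * ((k-1).factorial * (n-k).factorial)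
          ≤ (n-1).choose (k-1) * ((k-1).factorial * (n-k).factorial) * m := h5
        _ = ((n-1).choose (k-1) * m) * ((k-1).factorial * (n-k).factorial) := by ring
    rw [hF] at h7 ⊢
    calc (∑ i, (A i).card) ≤ (n-1).choose (k-1) * m := h7
      _ = m * (n-1).choose (k-1) := Nat.mul_comm _ _
end main
end

section
/- Let n ≥ 2k and let A, B be nonempty families of k-element subsets of [n] such that every member of A intersects every member of B. Then |A| + |B| ≤ C(n,k) − C(n−k, k) + 1. -/
open Finset

namespace Stmt2Aux

/-- Total weight of a family of finsets of naturals. -/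
def famWeight (𝒜 : Finset (Finset ℕ)) : ℕ := ∑ a ∈ 𝒜, ∑ x ∈ a, x

lemma union_sdiff_eq {i j : ℕ} (hij : i ≠ j) (a : Finset ℕ) :
    (a ⊔ {i}) \ {j} = insert i (a.erase j) := by
  ext x
  simp only [sup_eq_union, mem_sdiff, mem_union, mem_singleton, mem_insert, mem_erase]
  constructor
  · rintro ⟨h1 | h1, h2⟩
    · exact Or.inr ⟨h2, h1⟩
    · exact Or.inl h1
  · rintro (rfl | ⟨h1, h2⟩)
    · exact ⟨Or.inr rfl, hij⟩
    · exact ⟨Or.inl h2, h1⟩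

lemma compress_eq_of {i j : ℕ} (a : Finset ℕ) (hi : i ∉ a) (hj : j ∈ a) (hij : i ≠ j) :
    UV.compress {i} {j} a = insert i (a.erase j) := by
  rw [UV.compress_of_disjoint_of_le (by simpa using hi) (by simpa using hj), union_sdiff_eq hij]

lemma compress_cases {i j : ℕ} (a : Finset ℕ) :
    UV.compress {i} {j} a = a ∨
      (i ∉ a ∧ j ∈ a ∧ i ≠ j ∧ UV.compress {i} {j} a = insert i (a.erase j)) := by
  by_cases h : Disjoint ({i} : Finset ℕ) a ∧ ({j} : Finset ℕ) ≤ a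
  · by_cases hij : i = j
    · subst hij; exact Or.inl (UV.compress_self _ _)
    · have hi : i ∉ a := by simpa using h.1
      have hj : j ∈ a := by simpa using h.2
      exact Or.inr ⟨hi, hj, hij, compress_eq_of a hi hj hij⟩
  · exact Or.inl (by rw [UV.compress, if_neg h])

/-- Membership in a compression: the element is in the family (and its compression too),
or it is the (moving) compression of a family member. -/
lemma mem_compression_cases {i j : ℕ} {X : Finset (Finset ℕ)} {a' : Finset ℕ}
    (h : a' ∈ UV.compression {i} {j} X) :
    (a' ∈ X ∧ UV.compress {i} {j} a' ∈ X) ∨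
      (a' ∉ X ∧ ∃ a ∈ X, i ∉ a ∧ j ∈ a ∧ i ≠ j ∧ a' = insert i (a.erase j)) := by
  rcases UV.mem_compression.1 h with h1 | ⟨hnot, a, ha, hca⟩
  · exact Or.inl h1
  · refine Or.inr ⟨hnot, a, ha, ?_⟩
    rcases compress_cases (i := i) (j := j) a with hc | ⟨h1, h2, h3, h4⟩
    · rw [hc] at hca; subst hca; exact absurd ha hnot
    · rw [h4] at hca; exact ⟨h1, h2, h3, hca.symm⟩






lemma compression_decomp (i j : ℕ) (𝒜 : Finset (Finset ℕ)) :
    UV.compression {i} {j} 𝒜 =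
      (𝒜.filter (fun a => UV.compress {i} {j} a ∈ 𝒜)) ∪
        ((𝒜.filter (fun a => UV.compress {i} {j} a ∉ 𝒜)).image (UV.compress {i} {j})) := by
  unfold UV.compression
  congr 1
  ext x
  simp only [mem_filter, mem_image]
  constructor
  · rintro ⟨⟨b, hb, rfl⟩, hx⟩
    exact ⟨b, ⟨hb, hx⟩, rfl⟩
  · rintro ⟨b, ⟨hb, hbx⟩, rfl⟩
    exact ⟨⟨b, hb, rfl⟩, hbx⟩

lemma weight_spec {i j : ℕ} (hij : i < j) (𝒜 : Finset (Finset ℕ)) :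
    famWeight (UV.compression {i} {j} 𝒜) ≤ famWeight 𝒜 ∧
      (UV.compression {i} {j} 𝒜 ≠ 𝒜 → famWeight (UV.compression {i} {j} 𝒜) < famWeight 𝒜) := by
  classical
  set c := UV.compress ({i} : Finset ℕ) {j} with hc
  set K := 𝒜.filter (fun a => c a ∈ 𝒜) with hK
  set M := 𝒜.filter (fun a => c a ∉ 𝒜) with hM
  have hdecomp : UV.compression {i} {j} 𝒜 = K ∪ M.image c := compression_decomp i j 𝒜
  have hdisj : Disjoint K (M.image c) := by
    rw [disjoint_left]
    rintro x hxK hxM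
    obtain ⟨b, hb, rfl⟩ := mem_image.1 hxM
    exact (mem_filter.1 hb).2 (mem_filter.1 hxK).1
  have hsplit : famWeight 𝒜 = (∑ a ∈ K, ∑ x ∈ a, x) + (∑ a ∈ M, ∑ x ∈ a, x) := by
    rw [famWeight, ← sum_union (disjoint_filter_filter_not 𝒜 𝒜 _)]
    congr 1
    exact (filter_union_filter_not_eq _ 𝒜).symm
  have hwc : famWeight (UV.compression {i} {j} 𝒜) =
      (∑ a ∈ K, ∑ x ∈ a, x) + (∑ a ∈ M, ∑ x ∈ c a, x) := by
    rw [famWeight, hdecomp, sum_union hdisj]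
    congr 1
    refine sum_image ?_
    intro x hx y hy hxy
    exact UV.compress_injOn (by simpa [hM] using hx) (by simpa [hM] using hy) hxy
  have hlt : ∀ b ∈ M, ∑ x ∈ c b, x < ∑ x ∈ b, x := by
    intro b hb
    obtain ⟨hbA, hcb⟩ := mem_filter.1 hb
    have hne : c b ≠ b := fun h => hcb (h.symm ▸ hbA)
    rcases Stmt2Aux.compress_cases (i := i) (j := j) b with h | ⟨h1, h2, _, h4⟩
    · exact absurd h hne
    · rw [hc, h4]
      have hie : i ∉ b.erase j := fun h => h1 (mem_of_mem_erase h)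
      rw [sum_insert hie]
      have : j + ∑ x ∈ b.erase j, x = ∑ x ∈ b, x := Finset.add_sum_erase b (fun x => x) h2
      omega
  constructor
  · rw [hwc, hsplit]
    exact Nat.add_le_add_left (sum_le_sum fun b hb => (hlt b hb).le) _
  · intro hne
    have hMne : M.Nonempty := by
      by_contra hM0
      rw [not_nonempty_iff_eq_empty] at hM0
      have hKA : K = 𝒜 := by
        rw [hK, filter_eq_self]
        intro a ha
        by_contra hca
        have haM : a ∈ M := mem_filter.2 ⟨ha, hca⟩
        rw [hM0] at haM
        exact notMem_empty _ haM
      exact hne (by rw [hdecomp, hM0, image_empty, union_empty, hKA])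
    rw [hwc, hsplit]
    exact Nat.add_lt_add_left (sum_lt_sum_of_nonempty hMne hlt) _


/-- Cross-intersecting property. -/
def Cross (A B : Finset (Finset ℕ)) : Prop := ∀ a ∈ A, ∀ b ∈ B, (a ∩ b).Nonempty

lemma cross_symm {A B : Finset (Finset ℕ)} (h : Cross A B) : Cross B A := by
  intro b hb a ha
  obtain ⟨x, hx⟩ := h a ha b hb
  exact ⟨x, by rw [mem_inter] at hx ⊢; exact ⟨hx.2, hx.1⟩⟩

/-- Key step in cross preservation: a surviving set vs a moved set. -/
lemma cross_aux {i j : ℕ} {A B : Finset (Finset ℕ)} (hX : Cross A B)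
    {a' b : Finset ℕ} (ha' : a' ∈ A) (hca' : UV.compress {i} {j} a' ∈ A)
    (hb : b ∈ B) (hib : i ∉ b) (hjb : j ∈ b) (hij : i ≠ j) :
    (a' ∩ insert i (b.erase j)).Nonempty := by
  obtain ⟨x, hx⟩ := hX a' ha' b hb
  rw [mem_inter] at hx
  by_cases hxj : x = j
  · subst hxj
    by_cases hia' : i ∈ a'
    · exact ⟨i, mem_inter.2 ⟨hia', mem_insert_self _ _⟩⟩
    · rw [compress_eq_of a' hia' hx.1 hij] at hca'
      obtain ⟨y, hy⟩ := hX _ hca' b hb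
      rw [mem_inter, mem_insert] at hy
      rcases hy.1 with rfl | hy1
      · exact absurd hy.2 hib
      · refine ⟨y, mem_inter.2 ⟨mem_of_mem_erase hy1, mem_insert.2 (Or.inr ?_)⟩⟩
        exact mem_erase.2 ⟨(mem_erase.1 hy1).1, hy.2⟩
  · exact ⟨x, mem_inter.2 ⟨hx.1, mem_insert.2 (Or.inr (mem_erase.2 ⟨hxj, hx.2⟩))⟩⟩

lemma cross_compression (i j : ℕ) {A B : Finset (Finset ℕ)} (hX : Cross A B) :
    Cross (UV.compression {i} {j} A) (UV.compression {i} {j} B) := by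
  intro a' ha' b' hb'
  rcases mem_compression_cases ha' with ⟨haA, hcaA⟩ | ⟨-, a, haA, hia, hja, hij, rfl⟩
  · rcases mem_compression_cases hb' with ⟨hbB, -⟩ | ⟨-, b, hbB, hib, hjb, hij, rfl⟩
    · exact hX a' haA b' hbB
    · exact cross_aux hX haA hcaA hbB hib hjb hij
  · rcases mem_compression_cases hb' with ⟨hbB, hcbB⟩ | ⟨-, b, hbB, hib, hjb, -, rfl⟩
    · obtain ⟨y, hy⟩ := cross_aux (cross_symm hX) hbB hcbB haA hia hja hij
      rw [mem_inter] at hy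
      exact ⟨y, mem_inter.2 ⟨hy.2, hy.1⟩⟩
    · exact ⟨i, mem_inter.2 ⟨mem_insert_self _ _, mem_insert_self _ _⟩⟩

/-- Compression preserves the property of being a family of `k`-subsets of `range n`. -/
lemma props_compression {i j n k : ℕ} (hij : i < j) (hjn : j < n) {X : Finset (Finset ℕ)}
    (hX : ∀ a ∈ X, a ⊆ range n ∧ a.card = k) :
    ∀ a' ∈ UV.compression {i} {j} X, a' ⊆ range n ∧ a'.card = k := by
  intro a' ha'
  rcases mem_compression_cases ha' with ⟨haA, -⟩ | ⟨-, a, haA, hia, hja, hij', rfl⟩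
  · exact hX a' haA
  · obtain ⟨hsub, hcard⟩ := hX a haA
    constructor
    · intro x hx
      rcases mem_insert.1 hx with rfl | hx
      · exact mem_range.2 (lt_trans hij hjn)
      · exact hsub (mem_of_mem_erase hx)
    · have hie : i ∉ a.erase j := fun h => hia (mem_of_mem_erase h)
      rw [card_insert_of_notMem hie, card_erase_of_mem hja, hcard]
      have : 1 ≤ k := hcard ▸ card_pos.2 ⟨j, hja⟩
      omega

/-- A family is shifted if it is fixed by all singleton compressions within `range n`. -/
def IsShifted (n : ℕ) (X : Finset (Finset ℕ)) : Prop :=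
  ∀ i j : ℕ, i < j → j < n → UV.compression {i} {j} X = X

lemma shift_mem {n : ℕ} {X : Finset (Finset ℕ)} (hsh : IsShifted n X) {a : Finset ℕ}
    (ha : a ∈ X) {i j : ℕ} (hja : j ∈ a) (hia : i ∉ a) (hij : i < j) (hjn : j < n) :
    insert i (a.erase j) ∈ X := by
  have h := UV.sup_sdiff_mem_of_mem_compression (s := X) (u := ({i} : Finset ℕ)) (v := {j})
    (by rw [hsh i j hij hjn]; exact ha) (by simpa using hja) (by simpa using hia)
  rwa [union_sdiff_eq hij.ne a] at h

lemma exists_shifted (n k : ℕ) : ∀ (w : ℕ) (A B : Finset (Finset ℕ)),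
    famWeight A + famWeight B ≤ w →
    (∀ a ∈ A, a ⊆ range n ∧ a.card = k) → (∀ b ∈ B, b ⊆ range n ∧ b.card = k) →
    Cross A B →
    ∃ A' B', A'.card = A.card ∧ B'.card = B.card ∧
      (∀ a ∈ A', a ⊆ range n ∧ a.card = k) ∧ (∀ b ∈ B', b ⊆ range n ∧ b.card = k) ∧
      Cross A' B' ∧ IsShifted n A' ∧ IsShifted n B' := by
  intro w
  induction w using Nat.strong_induction_on with
  | _ w ih =>
    intro A B hw hA hB hX
    by_cases hs : IsShifted n A ∧ IsShifted n B
    · exact ⟨A, B, rfl, rfl, hA, hB, hX, hs.1, hs.2⟩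
    · obtain ⟨i, j, hij, hjn, hmove⟩ : ∃ i j, i < j ∧ j < n ∧
          (UV.compression {i} {j} A ≠ A ∨ UV.compression {i} {j} B ≠ B) := by
        by_contra hc
        push_neg at hc
        exact hs ⟨fun i j h1 h2 => (hc i j h1 h2).1, fun i j h1 h2 => (hc i j h1 h2).2⟩
      have hwA := weight_spec hij A
      have hwB := weight_spec hij B
      have hlt : famWeight (UV.compression {i} {j} A) + famWeight (UV.compression {i} {j} B)
          < famWeight A + famWeight B := by
        rcases hmove with h | h
        · exact Nat.add_lt_add_of_lt_of_le (hwA.2 h) hwB.1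
        · exact Nat.add_lt_add_of_le_of_lt hwA.1 (hwB.2 h)
      obtain ⟨A', B', h1, h2, h3, h4, h5, h6, h7⟩ :=
        ih _ (Nat.lt_of_lt_of_le hlt hw) (UV.compression {i} {j} A) (UV.compression {i} {j} B)
          le_rfl (props_compression hij hjn hA) (props_compression hij hjn hB)
          (cross_compression i j hX)
      exact ⟨A', B', h1.trans (UV.card_compression _ _ _), h2.trans (UV.card_compression _ _ _),
        h3, h4, h5, h6, h7⟩

lemma exists_without_top {m l : ℕ} {X : Finset (Finset ℕ)} (hsh : IsShifted (m+1) X)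
    (hX : ∀ a ∈ X, a ⊆ range (m+1) ∧ a.card = l) (hne : X.Nonempty) (hlm : l < m) :
    (X.filter (fun a => m ∉ a)).Nonempty := by
  obtain ⟨a, ha⟩ := hne
  by_cases ham : m ∈ a
  · obtain ⟨hsub, hcard⟩ := hX a ha
    have hex : (range m \ a).Nonempty := by
      rw [sdiff_nonempty]
      intro hsubm
      have := card_le_card hsubm
      rw [card_range, hcard] at this
      omega
    obtain ⟨y, hy⟩ := hex
    rw [mem_sdiff, mem_range] at hy
    have hmem := shift_mem hsh ha ham hy.2 hy.1 (Nat.lt_succ_self m)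
    refine ⟨insert y (a.erase m), mem_filter.2 ⟨hmem, ?_⟩⟩
    intro hmm
    rcases mem_insert.1 hmm with h | h
    · omega
    · exact (mem_erase.1 h).1 rfl
  · exact ⟨a, mem_filter.2 ⟨ha, ham⟩⟩

lemma side_count {m c k : ℕ} {a0 : Finset ℕ} (ha0sub : a0 ⊆ range m) (ha0card : a0.card = k)
    {Y : Finset (Finset ℕ)} (hY : ∀ b ∈ Y, b ⊆ range m ∧ b.card = c)
    (hmeet : ∀ b ∈ Y, (b ∩ a0).Nonempty) :
    Y.card + (m - k).choose c ≤ m.choose c := by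
  have hsub : Y ∪ powersetCard c (range m \ a0) ⊆ powersetCard c (range m) := by
    intro x hx
    rcases mem_union.1 hx with h | h
    · exact mem_powersetCard.2 ⟨(hY x h).1, (hY x h).2⟩
    · obtain ⟨hsub, hcard⟩ := mem_powersetCard.1 h
      exact mem_powersetCard.2 ⟨hsub.trans (sdiff_subset), hcard⟩
  have hdisj : Disjoint Y (powersetCard c (range m \ a0)) := by
    rw [disjoint_left]
    intro b hb hbD
    obtain ⟨x, hx⟩ := hmeet b hb
    rw [mem_inter] at hx
    have := (mem_powersetCard.1 hbD).1 hx.1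
    exact (mem_sdiff.1 this).2 hx.2
  have hcount := card_le_card hsub
  rw [card_union_of_disjoint hdisj, card_powersetCard, card_powersetCard, card_sdiff_of_subset ha0sub,
    card_range, ha0card] at hcount
  exact hcount

lemma main : ∀ n k (A B : Finset (Finset ℕ)), 2 * k ≤ n →
    (∀ a ∈ A, a ⊆ range n ∧ a.card = k) → (∀ b ∈ B, b ⊆ range n ∧ b.card = k) →
    A.Nonempty → B.Nonempty → Cross A B →
    A.card + B.card + (n - k).choose k ≤ n.choose k + 1 := by
  intro n
  induction n using Nat.strong_induction_on with
  | _ n ih =>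
  intro k A B hnk hA hB hAne hBne hX
  obtain ⟨a₀, ha₀⟩ := hAne
  obtain ⟨b₀, hb₀⟩ := hBne
  rcases Nat.eq_zero_or_pos k with rfl | hk1
  · have ha : a₀ = ∅ := card_eq_zero.1 (hA a₀ ha₀).2
    have hb : b₀ = ∅ := card_eq_zero.1 (hB b₀ hb₀).2
    obtain ⟨x, hx⟩ := hX a₀ ha₀ b₀ hb₀
    rw [ha, hb] at hx
    simp at hx
  rcases eq_or_lt_of_le hnk with heq | hlt
  · -- n = 2k : complement trick
    set f : Finset ℕ → Finset ℕ := fun b => range n \ b with hf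
    have hinj : Set.InjOn f B := by
      intro b1 h1 b2 h2 h12
      have e1 : range n \ (range n \ b1) = b1 := Finset.sdiff_sdiff_eq_self (hB b1 h1).1
      have e2 : range n \ (range n \ b2) = b2 := Finset.sdiff_sdiff_eq_self (hB b2 h2).1
      rw [← e1, ← e2]
      simp only [hf] at h12
      rw [h12]
    have hcard : (B.image f).card = B.card := card_image_of_injOn hinj
    have hdisj : Disjoint A (B.image f) := by
      rw [disjoint_left]
      intro a haA haB
      obtain ⟨b, hbB, rfl⟩ := mem_image.1 haB
      obtain ⟨x, hx⟩ := hX _ haA b hbB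
      rw [mem_inter] at hx
      exact (mem_sdiff.1 hx.1).2 hx.2
    have hsub : A ∪ B.image f ⊆ powersetCard k (range n) := by
      intro x hx
      rcases mem_union.1 hx with h | h
      · exact mem_powersetCard.2 ⟨(hA x h).1, (hA x h).2⟩
      · obtain ⟨b, hbB, rfl⟩ := mem_image.1 h
        refine mem_powersetCard.2 ⟨sdiff_subset, ?_⟩
        rw [card_sdiff_of_subset (hB b hbB).1, card_range, (hB b hbB).2]
        omega
    have h2 : A.card + (B.image f).card ≤ (range n).card.choose k := by
      rw [← card_union_of_disjoint hdisj]
      exact (card_le_card hsub).trans_eq (card_powersetCard _ _)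
    rw [card_range, hcard] at h2
    have hkk : n - k = k := by omega
    rw [hkk, Nat.choose_self]
    omega
  · rcases eq_or_lt_of_le (Nat.succ_le_of_lt hk1) with hk1' | hk2
    · -- k = 1
      subst hk1'
      have key : ∀ a ∈ A, ∀ b ∈ B, a = b := by
        intro a ha b hb
        obtain ⟨x, hx⟩ := hX a ha b hb
        rw [mem_inter] at hx
        obtain ⟨xa, ha'⟩ := card_eq_one.1 (hA a ha).2
        obtain ⟨xb, hb'⟩ := card_eq_one.1 (hB b hb).2
        subst ha'
        subst hb'
        rw [mem_singleton, mem_singleton] at hx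
        have : xa = xb := by omega
        rw [this]
      have hAs : A ⊆ {b₀} := fun a ha => mem_singleton.2 (key a ha b₀ hb₀)
      have hBs : B ⊆ {a₀} := fun b hb => mem_singleton.2 (key a₀ ha₀ b hb).symm
      have h1 : A.card ≤ 1 := (card_le_card hAs).trans_eq (card_singleton _)
      have h2 : B.card ≤ 1 := (card_le_card hBs).trans_eq (card_singleton _)
      rw [Nat.choose_one_right, Nat.choose_one_right]
      omega
    · -- k ≥ 2
      obtain ⟨l, rfl⟩ : ∃ l, k = l + 2 := ⟨k - 2, by omega⟩
      obtain ⟨m, rfl⟩ : ∃ m, n = m + 1 := ⟨n - 1, by omega⟩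
      have hm : 2 * l + 4 ≤ m := by omega
      obtain ⟨A', B', hcA, hcB, hA', hB', hX', hsA, hsB⟩ :=
        exists_shifted (m+1) (l+2) (famWeight A + famWeight B) A B le_rfl hA hB hX
      rw [← hcA, ← hcB]
      have hA'ne : A'.Nonempty := card_pos.1 (by rw [hcA]; exact card_pos.2 ⟨a₀, ha₀⟩)
      have hB'ne : B'.Nonempty := card_pos.1 (by rw [hcB]; exact card_pos.2 ⟨b₀, hb₀⟩)
      set A0 := A'.filter (fun a => m ∉ a) with hA0
      set A1 := (A'.filter (fun a => m ∈ a)).image (fun a => a.erase m) with hA1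
      set B0 := B'.filter (fun b => m ∉ b) with hB0
      set B1 := (B'.filter (fun b => m ∈ b)).image (fun b => b.erase m) with hB1
      have himgA : A1.card = (A'.filter (fun a => m ∈ a)).card := card_image_of_injOn (by
        intro x hx y hy hxy
        have hxy' : x.erase m = y.erase m := hxy
        rw [← insert_erase (mem_filter.1 hx).2, ← insert_erase (mem_filter.1 hy).2, hxy'])
      have himgB : B1.card = (B'.filter (fun b => m ∈ b)).card := card_image_of_injOn (by
        intro x hx y hy hxy
        have hxy' : x.erase m = y.erase m := hxy
        rw [← insert_erase (mem_filter.1 hx).2, ← insert_erase (mem_filter.1 hy).2, hxy'])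
      have hsplitA : A'.card = A0.card + A1.card := by
        rw [himgA, hA0, eq_comm, Nat.add_comm]
        exact card_filter_add_card_filter_not (fun a => m ∈ a)
      have hsplitB : B'.card = B0.card + B1.card := by
        rw [himgB, hB0, eq_comm, Nat.add_comm]
        exact card_filter_add_card_filter_not (fun b => m ∈ b)
      have hpropsA0 : ∀ a ∈ A0, a ⊆ range m ∧ a.card = l + 2 := by
        intro a ha
        obtain ⟨haA, ham⟩ := mem_filter.1 ha
        obtain ⟨hsub, hcard⟩ := hA' a haA
        refine ⟨fun x hx => ?_, hcard⟩
        have h1 := mem_range.1 (hsub hx)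
        have h2 : x ≠ m := fun h => ham (h ▸ hx)
        exact mem_range.2 (by omega)
      have hpropsB0 : ∀ b ∈ B0, b ⊆ range m ∧ b.card = l + 2 := by
        intro b hb
        obtain ⟨hbB, hbm⟩ := mem_filter.1 hb
        obtain ⟨hsub, hcard⟩ := hB' b hbB
        refine ⟨fun x hx => ?_, hcard⟩
        have h1 := mem_range.1 (hsub hx)
        have h2 : x ≠ m := fun h => hbm (h ▸ hx)
        exact mem_range.2 (by omega)
      have hpropsA1 : ∀ a ∈ A1, a ⊆ range m ∧ a.card = l + 1 := by
        intro a' ha'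
        obtain ⟨a, ha, rfl⟩ := mem_image.1 ha'
        obtain ⟨haA, ham⟩ := mem_filter.1 ha
        obtain ⟨hsub, hcard⟩ := hA' a haA
        constructor
        · intro x hx
          obtain ⟨hxm, hxa⟩ := mem_erase.1 hx
          have := mem_range.1 (hsub hxa)
          exact mem_range.2 (by omega)
        · rw [card_erase_of_mem ham, hcard]
          omega
      have hpropsB1 : ∀ b' ∈ B1, b' ⊆ range m ∧ b'.card = l + 1 := by
        intro b' hb'
        obtain ⟨b, hb, rfl⟩ := mem_image.1 hb'
        obtain ⟨hbB, hbm⟩ := mem_filter.1 hb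
        obtain ⟨hsub, hcard⟩ := hB' b hbB
        constructor
        · intro x hx
          obtain ⟨hxm, hxb⟩ := mem_erase.1 hx
          have := mem_range.1 (hsub hxb)
          exact mem_range.2 (by omega)
        · rw [card_erase_of_mem hbm, hcard]
          omega
      have hA0ne : A0.Nonempty := exists_without_top hsA hA' hA'ne (by omega)
      have hB0ne : B0.Nonempty := exists_without_top hsB hB' hB'ne (by omega)
      have hX00 : Cross A0 B0 :=
        fun a ha b hb => hX' a (mem_filter.1 ha).1 b (mem_filter.1 hb).1
      have IH0 := ih m (Nat.lt_succ_self m) (l+2) A0 B0 (by omega) hpropsA0 hpropsB0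
        hA0ne hB0ne hX00
      have F1 : (m+1).choose (l+2) = m.choose (l+1) + m.choose (l+2) :=
        Nat.choose_succ_succ m (l+1)
      have F2 : (m + 1 - (l+2)).choose (l+2)
          = (m - (l+2)).choose (l+1) + (m - (l+2)).choose (l+2) := by
        rw [show m + 1 - (l+2) = (m - (l+2)) + 1 by omega]
        exact Nat.choose_succ_succ _ _
      -- bound for B1 against a member of A0 (and symmetrically)
      have hboundB1 : B1.Nonempty → B1.card + (m - (l+2)).choose (l+1) ≤ m.choose (l+1) := by
        intro _
        obtain ⟨a0, ha0'⟩ := hA0ne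
        refine side_count (hpropsA0 a0 ha0').1 (hpropsA0 a0 ha0').2 hpropsB1 ?_
        intro b' hb'
        obtain ⟨b, hb, rfl⟩ := mem_image.1 hb'
        obtain ⟨hbB, hbm⟩ := mem_filter.1 hb
        obtain ⟨x, hx⟩ := hX' a0 (mem_filter.1 ha0').1 b hbB
        rw [mem_inter] at hx
        have hxm : x ≠ m := by
          intro h
          have := (hpropsA0 a0 ha0').1 hx.1
          rw [h, mem_range] at this
          omega
        exact ⟨x, mem_inter.2 ⟨mem_erase.2 ⟨hxm, hx.2⟩, hx.1⟩⟩
      have hboundA1 : A1.Nonempty → A1.card + (m - (l+2)).choose (l+1) ≤ m.choose (l+1) := by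
        intro _
        obtain ⟨c0, hc0'⟩ := hB0ne
        refine side_count (hpropsB0 c0 hc0').1 (hpropsB0 c0 hc0').2 hpropsA1 ?_
        intro a' ha'
        obtain ⟨a, ha, rfl⟩ := mem_image.1 ha'
        obtain ⟨haA, ham⟩ := mem_filter.1 ha
        obtain ⟨x, hx⟩ := hX' a haA c0 (mem_filter.1 hc0').1
        rw [mem_inter] at hx
        have hxm : x ≠ m := by
          intro h
          have := (hpropsB0 c0 hc0').1 hx.2
          rw [h, mem_range] at this
          omega
        exact ⟨x, mem_inter.2 ⟨mem_erase.2 ⟨hxm, hx.1⟩, hx.2⟩⟩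
      by_cases hA1e : A1 = ∅
      · by_cases hB1e : B1 = ∅
        · have e1 : A1.card = 0 := by rw [hA1e]; rfl
          have e2 : B1.card = 0 := by rw [hB1e]; rfl
          have Fmono : (m - (l+2)).choose (l+1) ≤ m.choose (l+1) :=
            Nat.choose_le_choose _ (by omega)
          omega
        · have hB1ne : B1.Nonempty := nonempty_iff_ne_empty.2 hB1e
          have e1 : A1.card = 0 := by rw [hA1e]; rfl
          have h3 := hboundB1 hB1ne
          omega
      · by_cases hB1e : B1 = ∅
        · have hA1ne : A1.Nonempty := nonempty_iff_ne_empty.2 hA1e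
          have e2 : B1.card = 0 := by rw [hB1e]; rfl
          have h3 := hboundA1 hA1ne
          omega
        · -- both nonempty : use IH at level l+1
          have hA1ne : A1.Nonempty := nonempty_iff_ne_empty.2 hA1e
          have hB1ne : B1.Nonempty := nonempty_iff_ne_empty.2 hB1e
          have hX11 : Cross A1 B1 := by
            intro a' ha' b' hb'
            obtain ⟨a, ha, rfl⟩ := mem_image.1 ha'
            obtain ⟨b, hb, rfl⟩ := mem_image.1 hb'
            obtain ⟨haA, ham⟩ := mem_filter.1 ha
            obtain ⟨hbB, hbm⟩ := mem_filter.1 hb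
            by_contra hempty
            rw [not_nonempty_iff_eq_empty] at hempty
            have hcarda : (a.erase m).card = l + 1 := by
              rw [card_erase_of_mem ham, (hA' a haA).2]
              omega
            have hcardb : (b.erase m).card = l + 1 := by
              rw [card_erase_of_mem hbm, (hB' b hbB).2]
              omega
            have hcardu : (a.erase m ∪ b.erase m).card ≤ 2 * l + 2 := by
              have := card_union_le (a.erase m) (b.erase m)
              omega
            have hyex : (range m \ (a.erase m ∪ b.erase m)).Nonempty := by
              rw [sdiff_nonempty]
              intro hsub
              have := card_le_card hsub
              rw [card_range] at this
              omega
            obtain ⟨y, hy⟩ := hyex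
            rw [mem_sdiff, mem_range, mem_union] at hy
            obtain ⟨hym, hyab⟩ := hy
            have hya : y ∉ a := fun h => hyab (Or.inl (mem_erase.2 ⟨by omega, h⟩))
            have hmem := shift_mem hsA haA ham hya hym (Nat.lt_succ_self m)
            obtain ⟨x, hx⟩ := hX' _ hmem b hbB
            rw [mem_inter, mem_insert] at hx
            rcases hx.1 with rfl | hxa
            · exact hyab (Or.inr (mem_erase.2 ⟨by omega, hx.2⟩))
            · have hxm : x ≠ m := (mem_erase.1 hxa).1
              have hxb : x ∈ b.erase m := mem_erase.2 ⟨hxm, hx.2⟩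
              have : x ∈ a.erase m ∩ b.erase m := mem_inter.2 ⟨hxa, hxb⟩
              rw [hempty] at this
              exact notMem_empty _ this
          have IH1 := ih m (Nat.lt_succ_self m) (l+1) A1 B1 (by omega) hpropsA1 hpropsB1
            hA1ne hB1ne hX11
          have F3 : (m - (l+1)).choose (l+1)
              = (m - (l+2)).choose l + (m - (l+2)).choose (l+1) := by
            rw [show m - (l+1) = (m - (l+2)) + 1 by omega]
            exact Nat.choose_succ_succ _ _
          have F4 : 1 ≤ (m - (l+2)).choose l := Nat.choose_pos (by omega)
          omega

end Stmt2Aux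

theorem stmt2 (n k : ℕ) (hnk : 2 * k ≤ n)
    (A B : Finset (Finset (Fin n)))
    (hAu : ∀ a ∈ A, a.card = k) (hBu : ∀ b ∈ B, b.card = k)
    (hAne : A.Nonempty) (hBne : B.Nonempty)
    (hcross : ∀ a ∈ A, ∀ b ∈ B, (a ∩ b).Nonempty) :
    A.card + B.card ≤ n.choose k - (n - k).choose k + 1 := by
  classical
  set f : Finset (Fin n) → Finset ℕ := fun s => s.image Fin.val with hf
  have hfinj : Function.Injective f := Finset.image_injective Fin.val_injective
  have hApr : ∀ a ∈ A.image f, a ⊆ Finset.range n ∧ a.card = k := by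
    intro a ha
    obtain ⟨s, hs, rfl⟩ := Finset.mem_image.1 ha
    constructor
    · intro x hx
      obtain ⟨v, _, rfl⟩ := Finset.mem_image.1 hx
      exact Finset.mem_range.2 v.isLt
    · rw [Finset.card_image_of_injective s Fin.val_injective]
      exact hAu s hs
  have hBpr : ∀ b ∈ B.image f, b ⊆ Finset.range n ∧ b.card = k := by
    intro b hb
    obtain ⟨s, hs, rfl⟩ := Finset.mem_image.1 hb
    constructor
    · intro x hx
      obtain ⟨v, _, rfl⟩ := Finset.mem_image.1 hx
      exact Finset.mem_range.2 v.isLt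
    · rw [Finset.card_image_of_injective s Fin.val_injective]
      exact hBu s hs
  have hcross' : Stmt2Aux.Cross (A.image f) (B.image f) := by
    intro a ha b hb
    obtain ⟨s, hs, rfl⟩ := Finset.mem_image.1 ha
    obtain ⟨t, ht, rfl⟩ := Finset.mem_image.1 hb
    obtain ⟨x, hx⟩ := hcross s hs t ht
    rw [Finset.mem_inter] at hx
    exact ⟨(x : ℕ), Finset.mem_inter.2
      ⟨Finset.mem_image_of_mem _ hx.1, Finset.mem_image_of_mem _ hx.2⟩⟩
  have hmain := Stmt2Aux.main n k (A.image f) (B.image f) hnk hApr hBpr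
    (hAne.image f) (hBne.image f) hcross'
  rw [Finset.card_image_of_injective A hfinj, Finset.card_image_of_injective B hfinj] at hmain
  have hmono : (n - k).choose k ≤ n.choose k := Nat.choose_le_choose k (Nat.sub_le n k)
  omega
end

section
/- Let G be a vertex-transitive graph, B a nonempty subset of V(G), and S an independent set in G. Then |S|/|V(G)| ≤ α(G[B])/|B|, where G[B] is the subgraph induced on B. Moreover, equality implies |S ∩ B| = α(G[B]). -/
open scoped Classical

/-- The maximum size of an independent set of `G` contained in `B`
(the independence number of the induced subgraph `G[B]`). -/
noncomputable def indepNumIn {V : Type*} [Fintype V] (G : SimpleGraph V) (B : Finset V) : ℕ :=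
  Nat.findGreatest
    (fun m => ∃ s : Finset V, s ⊆ B ∧ (∀ a ∈ s, ∀ b ∈ s, ¬ G.Adj a b) ∧ s.card = m)
    B.card

lemma indep_le_indepNumIn {V : Type*} [Fintype V] (G : SimpleGraph V) (B : Finset V)
    (s : Finset V) (hsub : s ⊆ B) (hind : ∀ a ∈ s, ∀ b ∈ s, ¬ G.Adj a b) :
    s.card ≤ indepNumIn G B :=
  Nat.le_findGreatest (Finset.card_le_card hsub) ⟨s, hsub, hind, rfl⟩

set_option maxHeartbeats 2000000 in
theorem stmt4 {V : Type*} [Fintype V] [DecidableEq V] (G : SimpleGraph V)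
    (htrans : ∀ u v : V, ∃ e : G ≃g G, e u = v)
    (B : Finset V) (hB : B.Nonempty)
    (S : Finset V) (hS : ∀ a ∈ S, ∀ b ∈ S, ¬ G.Adj a b) :
    (S.card : ℚ) / (Fintype.card V : ℚ) ≤ (indepNumIn G B : ℚ) / (B.card : ℚ) ∧
      ((S.card : ℚ) / (Fintype.card V : ℚ) = (indepNumIn G B : ℚ) / (B.card : ℚ) →
        (S ∩ B).card = indepNumIn G B) := by
  have hVne : Nonempty V := ⟨hB.choose⟩
  set n := Fintype.card V with hn
  have hnpos : 0 < n := Fintype.card_pos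
  set α := indepNumIn G B with hα
  -- the automorphism group as a finset of permutations
  set A : Finset (Equiv.Perm V) :=
    Finset.univ.filter (fun σ => ∀ a b, G.Adj (σ a) (σ b) ↔ G.Adj a b) with hA
  have memA : ∀ σ : Equiv.Perm V, σ ∈ A ↔ ∀ a b, G.Adj (σ a) (σ b) ↔ G.Adj a b := by
    intro σ; simp [hA]
  have hA_one : (1 : Equiv.Perm V) ∈ A := by
    rw [memA]; intro a b; rfl
  have hA_mul : ∀ σ τ : Equiv.Perm V, σ ∈ A → τ ∈ A → σ * τ ∈ A := by
    intro σ τ hσ hτ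
    rw [memA] at *
    intro a b
    simpa [Equiv.Perm.mul_apply] using (hσ (τ a) (τ b)).trans (hτ a b)
  have hA_inv : ∀ σ : Equiv.Perm V, σ ∈ A → σ⁻¹ ∈ A := by
    intro σ hσ
    rw [memA] at *
    intro a b
    have := hσ (σ⁻¹ a) (σ⁻¹ b)
    simpa using this.symm
  have hA_trans : ∀ u v : V, ∃ σ ∈ A, σ u = v := by
    intro u v
    obtain ⟨e, he⟩ := htrans u v
    refine ⟨e.toEquiv, ?_, he⟩
    rw [memA]; intro a b; exact e.map_adj_iff
  -- fibers
  have hfib_const : ∀ s b b' : V,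
      (A.filter (fun σ => σ s = b)).card = (A.filter (fun σ => σ s = b')).card := by
    intro s b b'
    obtain ⟨τ, hτA, hτ⟩ := hA_trans b b'
    apply Finset.card_bij' (fun σ _ => τ * σ) (fun σ _ => τ⁻¹ * σ)
    · intro σ hσ
      simp only [Finset.mem_filter] at hσ ⊢
      exact ⟨hA_mul _ _ hτA hσ.1, by simp [Equiv.Perm.mul_apply, hσ.2, hτ]⟩
    · intro σ hσ
      simp only [Finset.mem_filter] at hσ ⊢
      refine ⟨hA_mul _ _ (hA_inv _ hτA) hσ.1, ?_⟩
      have : τ⁻¹ (σ s) = τ⁻¹ b' := by rw [hσ.2]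
      simpa [Equiv.Perm.mul_apply, ← hτ] using this
    · intro σ _; simp [mul_assoc]
    · intro σ _; simp [mul_assoc]
  have hfib_sum : ∀ s : V, ∑ b : V, (A.filter (fun σ => σ s = b)).card = A.card :=
    by
    intro s
    exact (Finset.card_eq_sum_card_fiberwise (s := A) (t := (Finset.univ : Finset V))
      (f := fun σ => σ s) (fun σ _ => Finset.mem_univ _)).symm
  have hfib : ∀ s b : V, n * (A.filter (fun σ => σ s = b)).card = A.card := by
    intro s b
    have := hfib_sum s
    rw [Finset.sum_congr rfl (fun b' _ => hfib_const s b' b)] at this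
    simpa [Finset.sum_const, Finset.card_univ, hn] using this
  -- the key double count: n * ∑_{σ ∈ A} |σ⁻¹B ∩ S| = |S| * |B| * |A|
  have hsplit : ∀ x : V, (A.filter (fun σ => σ x ∈ B)).card
      = ∑ b ∈ B, (A.filter (fun σ => σ x = b)).card := by
    intro x
    rw [Finset.card_eq_sum_card_fiberwise (s := A.filter (fun σ => σ x ∈ B)) (t := B)
      (f := fun σ => σ x) (fun σ hσ => (Finset.mem_filter.mp hσ).2)]
    refine Finset.sum_congr rfl (fun b hb => ?_)
    congr 1
    rw [Finset.filter_filter]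
    refine Finset.filter_congr (fun σ _ => ?_)
    constructor
    · exact fun h => h.2
    · exact fun h => ⟨h ▸ hb, h⟩
  have hsum : n * ∑ σ ∈ A, (S.filter (fun x => σ x ∈ B)).card
      = S.card * B.card * A.card := by
    have h1 : ∑ σ ∈ A, (S.filter (fun x => σ x ∈ B)).card
        = ∑ x ∈ S, ∑ b ∈ B, (A.filter (fun σ => σ x = b)).card := by
      calc ∑ σ ∈ A, (S.filter (fun x => σ x ∈ B)).card
          = ∑ σ ∈ A, ∑ x ∈ S, if σ x ∈ B then 1 else 0 :=
            Finset.sum_congr rfl (fun σ _ => Finset.card_filter _ _)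
        _ = ∑ x ∈ S, ∑ σ ∈ A, if σ x ∈ B then 1 else 0 := Finset.sum_comm
        _ = ∑ x ∈ S, (A.filter (fun σ => σ x ∈ B)).card :=
            Finset.sum_congr rfl (fun x _ => (Finset.card_filter _ _).symm)
        _ = ∑ x ∈ S, ∑ b ∈ B, (A.filter (fun σ => σ x = b)).card :=
            Finset.sum_congr rfl (fun x _ => hsplit x)
    rw [h1, Finset.mul_sum]
    simp_rw [Finset.mul_sum, hfib]
    simp [Finset.sum_const, mul_comm, mul_assoc, mul_left_comm]
  -- each term is at most α
  have htermle : ∀ σ ∈ A, (S.filter (fun x => σ x ∈ B)).card ≤ α := by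
    intro σ hσ
    set t := (S.filter (fun x => σ x ∈ B)).image σ with ht
    have htsub : t ⊆ B := by
      intro b hb
      obtain ⟨x, hx, rfl⟩ := Finset.mem_image.mp hb
      exact (Finset.mem_filter.mp hx).2
    have htind : ∀ a ∈ t, ∀ b ∈ t, ¬ G.Adj a b := by
      intro a ha b hb
      obtain ⟨x, hx, rfl⟩ := Finset.mem_image.mp ha
      obtain ⟨y, hy, rfl⟩ := Finset.mem_image.mp hb
      rw [(memA σ).mp hσ x y]
      exact hS x (Finset.mem_filter.mp hx).1 y (Finset.mem_filter.mp hy).1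
    have := indep_le_indepNumIn G B t htsub htind
    rwa [ht, Finset.card_image_of_injective _ σ.injective] at this
  have hAne : A.Nonempty := ⟨1, hA_one⟩
  have hApos : 0 < A.card := Finset.card_pos.mpr hAne
  have hmain : S.card * B.card ≤ n * α := by
    have h2 : ∑ σ ∈ A, (S.filter (fun x => σ x ∈ B)).card ≤ A.card * α := by
      calc ∑ σ ∈ A, (S.filter (fun x => σ x ∈ B)).card ≤ ∑ _σ ∈ A, α :=
            Finset.sum_le_sum htermle
        _ = A.card * α := by simp [Finset.sum_const, mul_comm]
    have h3 : S.card * B.card * A.card ≤ n * α * A.card := by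
      rw [← hsum]
      calc n * ∑ σ ∈ A, (S.filter (fun x => σ x ∈ B)).card
          ≤ n * (A.card * α) := Nat.mul_le_mul_left n h2
        _ = n * α * A.card := by ring
    exact Nat.le_of_mul_le_mul_right h3 hApos
  have hBpos : 0 < B.card := Finset.card_pos.mpr hB
  have hnQ : (0:ℚ) < (n : ℚ) := by exact_mod_cast hnpos
  have hBQ : (0:ℚ) < (B.card : ℚ) := by exact_mod_cast hBpos
  constructor
  · rw [div_le_div_iff₀ hnQ hBQ]
    exact_mod_cast hmain.trans_eq (mul_comm n α)
  · intro heq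
    rw [div_eq_div_iff hnQ.ne' hBQ.ne'] at heq
    have heqN : S.card * B.card = α * n := by exact_mod_cast heq
    have hSBle : (S ∩ B).card ≤ α :=
      indep_le_indepNumIn G B _ Finset.inter_subset_right
        (fun a ha b hb => hS a (Finset.mem_inter.mp ha).1 b (Finset.mem_inter.mp hb).1)
    by_contra hne
    have hlt : (S ∩ B).card < α := lt_of_le_of_ne hSBle hne
    have hone : S.filter (fun x => (1 : Equiv.Perm V) x ∈ B) = S ∩ B := by
      ext x
      rw [Finset.mem_filter, Finset.mem_inter]; simp
    have hstrict : ∑ σ ∈ A, (S.filter (fun x => σ x ∈ B)).card < A.card * α := by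
      have := Finset.sum_lt_sum (f := fun σ : Equiv.Perm V =>
        (S.filter (fun x => σ x ∈ B)).card) (g := fun _ => α) htermle
        ⟨1, hA_one, by
          show (S.filter (fun x => (1 : Equiv.Perm V) x ∈ B)).card < α
          rw [hone]; exact hlt⟩
      simpa [Finset.sum_const, mul_comm] using this
    have hfinal : S.card * B.card * A.card < n * α * A.card := by
      rw [← hsum]
      calc n * ∑ σ ∈ A, (S.filter (fun x => σ x ∈ B)).card
          < n * (A.card * α) := (Nat.mul_lt_mul_left hnpos).mpr hstrict
        _ = n * α * A.card := by ring
    rw [heqN, mul_comm α n] at hfinal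
    exact lt_irrefl _ hfinal
end

section
/- Let G be a vertex-transitive graph and A an independent set of G. Then |A| / |N[A]| ≤ α(G) / |V(G)|, where N[A] = A ∪ N(A) is the closed neighborhood of A. -/
open scoped Classical

/-- The independence number of `G`. -/
noncomputable def indepNum {V : Type*} [Fintype V] (G : SimpleGraph V) : ℕ :=
  Nat.findGreatest
    (fun m => ∃ s : Finset V, (∀ a ∈ s, ∀ b ∈ s, ¬ G.Adj a b) ∧ s.card = m)
    (Fintype.card V)

/-- The closed neighborhood `N[A] = A ∪ N(A)` of a set of vertices. -/
noncomputable def closedNbhd {V : Type*} [Fintype V] (G : SimpleGraph V) (A : Finset V) :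
    Finset V :=
  A ∪ Finset.univ.filter (fun b => ∃ a ∈ A, G.Adj a b)

theorem stmt5 {V : Type*} [Fintype V] [Nonempty V] (G : SimpleGraph V)
    (htrans : ∀ u v : V, ∃ e : G ≃g G, e u = v)
    (A : Finset V) (hA : ∀ a ∈ A, ∀ b ∈ A, ¬ G.Adj a b) :
    (A.card : ℚ) / ((closedNbhd G A).card : ℚ) ≤
      (indepNum G : ℚ) / (Fintype.card V : ℚ) := by
  classical
  haveI : Fintype (G ≃g G) :=
    Fintype.ofInjective (fun g : G ≃g G => (g : V → V)) (fun g h hgh => by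
      ext x; exact congrFun hgh x)
  -- a maximum independent set S
  obtain ⟨S, hSind, hScard⟩ :
      ∃ s : Finset V, (∀ a ∈ s, ∀ b ∈ s, ¬ G.Adj a b) ∧ s.card = indepNum G :=
    Nat.findGreatest_spec
      (P := fun m => ∃ s : Finset V, (∀ a ∈ s, ∀ b ∈ s, ¬ G.Adj a b) ∧ s.card = m)
      (Nat.zero_le _) ⟨∅, by simp⟩
  have hmax : ∀ s : Finset V, (∀ a ∈ s, ∀ b ∈ s, ¬ G.Adj a b) → s.card ≤ indepNum G :=
    fun s hs => Nat.le_findGreatest (Finset.card_le_univ s) ⟨s, hs, rfl⟩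
  set N := closedNbhd G A with hN
  have hAN : A ⊆ N := Finset.subset_union_left
  set k := Fintype.card (G ≃g G) with hk
  set n := Fintype.card V with hn
  -- key : every translate of S meets N[A] in at least |A| vertices
  have key : ∀ g : G ≃g G, A.card ≤ (S.filter (fun s => (g s) ∈ N)).card := by
    intro g
    set T := S.image g with hT
    have hTind : ∀ a ∈ T, ∀ b ∈ T, ¬ G.Adj a b := by
      intro a ha b hb
      obtain ⟨x, hx, rfl⟩ := Finset.mem_image.1 ha
      obtain ⟨y, hy, rfl⟩ := Finset.mem_image.1 hb
      rw [g.map_adj_iff]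
      exact hSind x hx y hy
    have hTcard : T.card = indepNum G := by
      rw [hT, Finset.card_image_of_injective _ g.injective, hScard]
    have hBind : ∀ a ∈ (T \ N) ∪ A, ∀ b ∈ (T \ N) ∪ A, ¬ G.Adj a b := by
      intro a ha b hb hadj
      rcases Finset.mem_union.1 ha with ha' | ha' <;>
        rcases Finset.mem_union.1 hb with hb' | hb'
      · exact hTind a (Finset.mem_sdiff.1 ha').1 b (Finset.mem_sdiff.1 hb').1 hadj
      · have : a ∈ N := by
          rw [hN, closedNbhd]
          exact Finset.mem_union_right _
            (Finset.mem_filter.2 ⟨Finset.mem_univ _, ⟨b, hb', hadj.symm⟩⟩)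
        exact (Finset.mem_sdiff.1 ha').2 this
      · have : b ∈ N := by
          rw [hN, closedNbhd]
          exact Finset.mem_union_right _
            (Finset.mem_filter.2 ⟨Finset.mem_univ _, ⟨a, ha', hadj⟩⟩)
        exact (Finset.mem_sdiff.1 hb').2 this
      · exact hA a ha' b hb' hadj
    have hdisj : Disjoint (T \ N) A :=
      Finset.disjoint_left.2 fun x hx hxA => (Finset.mem_sdiff.1 hx).2 (hAN hxA)
    have hB : (T \ N).card + A.card ≤ indepNum G := by
      rw [← Finset.card_union_of_disjoint hdisj]
      exact hmax _ hBind
    have hsplit : (T \ N).card + (T ∩ N).card = T.card :=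
      Finset.card_sdiff_add_card_inter T N
    have hfil : (T ∩ N).card = (S.filter (fun s => (g s) ∈ N)).card := by
      rw [← Finset.filter_mem_eq_inter, hT, Finset.filter_image,
        Finset.card_image_of_injective _ g.injective]
    omega
  -- orbit counting: fibers of g ↦ g s all have the same size
  have hconst : ∀ s v w : V,
      (Finset.univ.filter (fun g : G ≃g G => g s = v)).card =
      (Finset.univ.filter (fun g : G ≃g G => g s = w)).card := by
    intro s v w
    obtain ⟨e, he⟩ := htrans v w
    refine Finset.card_bij' (fun g _ => g.trans e) (fun g _ => g.trans e.symm)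
      ?_ ?_ ?_ ?_
    · intro g hg
      simp only [Finset.mem_filter, Finset.mem_univ, true_and] at hg ⊢
      simp [RelIso.trans_apply, hg, he]
    · intro g hg
      simp only [Finset.mem_filter, Finset.mem_univ, true_and] at hg ⊢
      simp only [RelIso.trans_apply, hg]
      exact (Equiv.symm_apply_eq e.toEquiv).2 he.symm
    · intro g hg
      apply RelIso.ext
      intro x
      simp [RelIso.trans_apply]
    · intro g hg
      apply RelIso.ext
      intro x
      simp [RelIso.trans_apply]
  have hsum : ∀ s : V,
      ∑ v : V, (Finset.univ.filter (fun g : G ≃g G => g s = v)).card = k := by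
    intro s
    rw [hk, ← Finset.card_univ]
    exact (Finset.card_eq_sum_card_fiberwise (fun g _ => Finset.mem_univ (g s))).symm
  have hc : ∀ s v : V,
      n * (Finset.univ.filter (fun g : G ≃g G => g s = v)).card = k := by
    intro s v
    calc n * (Finset.univ.filter (fun g : G ≃g G => g s = v)).card
        = ∑ _w : V, (Finset.univ.filter (fun g : G ≃g G => g s = v)).card := by
          rw [Finset.sum_const, Finset.card_univ, smul_eq_mul, hn]
      _ = ∑ w : V, (Finset.univ.filter (fun g : G ≃g G => g s = w)).card :=
          Finset.sum_congr rfl fun w _ => hconst s v w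
      _ = k := hsum s
  -- double counting
  have hdouble : ∑ g : G ≃g G, (S.filter (fun s => (g s) ∈ N)).card
      = ∑ s ∈ S, ∑ v ∈ N, (Finset.univ.filter (fun g : G ≃g G => g s = v)).card := by
    calc ∑ g : G ≃g G, (S.filter (fun s => (g s) ∈ N)).card
        = ∑ g : G ≃g G, ∑ s ∈ S, (if (g s) ∈ N then 1 else 0) := by
          refine Finset.sum_congr rfl fun g _ => ?_
          rw [Finset.card_filter]
      _ = ∑ g : G ≃g G, ∑ s ∈ S, ∑ v ∈ N, (if g s = v then 1 else 0) := by
          refine Finset.sum_congr rfl fun g _ => Finset.sum_congr rfl fun s _ => ?_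
          rw [Finset.sum_ite_eq N (g s) (fun _ => 1)]
      _ = ∑ s ∈ S, ∑ g : G ≃g G, ∑ v ∈ N, (if g s = v then 1 else 0) :=
          Finset.sum_comm
      _ = ∑ s ∈ S, ∑ v ∈ N, ∑ g : G ≃g G, (if g s = v then 1 else 0) :=
          Finset.sum_congr rfl fun s _ => Finset.sum_comm
      _ = ∑ s ∈ S, ∑ v ∈ N, (Finset.univ.filter (fun g : G ≃g G => g s = v)).card := by
          refine Finset.sum_congr rfl fun s _ => Finset.sum_congr rfl fun v _ => ?_
          rw [Finset.card_filter]
  have hlow : k * A.card ≤ ∑ g : G ≃g G, (S.filter (fun s => (g s) ∈ N)).card := by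
    calc k * A.card = ∑ _g : G ≃g G, A.card := by
          rw [Finset.sum_const, Finset.card_univ, smul_eq_mul, hk]
      _ ≤ _ := Finset.sum_le_sum fun g _ => key g
  have hup : n * ∑ g : G ≃g G, (S.filter (fun s => (g s) ∈ N)).card
      = indepNum G * N.card * k := by
    rw [hdouble, Finset.mul_sum]
    calc ∑ s ∈ S, n * ∑ v ∈ N, (Finset.univ.filter (fun g : G ≃g G => g s = v)).card
        = ∑ s ∈ S, ∑ v ∈ N, n * (Finset.univ.filter (fun g : G ≃g G => g s = v)).card := by
          refine Finset.sum_congr rfl fun s _ => ?_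
          rw [Finset.mul_sum]
      _ = ∑ s ∈ S, ∑ _v ∈ N, k :=
          Finset.sum_congr rfl fun s _ => Finset.sum_congr rfl fun v _ => hc s v
      _ = indepNum G * N.card * k := by
          simp [Finset.sum_const, hScard]
          ring
  have hkpos : 0 < k := by
    rw [hk]
    exact Fintype.card_pos_iff.2 ⟨RelIso.refl _⟩
  have hfinal : n * A.card ≤ indepNum G * N.card := by
    have h1 : n * (k * A.card) ≤ indepNum G * N.card * k :=
      le_trans (Nat.mul_le_mul_left n hlow) (le_of_eq hup)
    have h2 : k * (n * A.card) ≤ k * (indepNum G * N.card) := by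
      calc k * (n * A.card) = n * (k * A.card) := by ring
        _ ≤ indepNum G * N.card * k := h1
        _ = k * (indepNum G * N.card) := by ring
    exact Nat.le_of_mul_le_mul_left h2 hkpos
  -- conclude over ℚ
  rcases Nat.eq_zero_or_pos N.card with h0 | hpos
  · have hA0 : A.card = 0 := by
      have := Finset.card_le_card hAN; omega
    rw [hA0]
    simp only [Nat.cast_zero, zero_div]
    positivity
  · have hnpos : 0 < n := Fintype.card_pos
    rw [div_le_div_iff₀ (by exact_mod_cast hpos) (by exact_mod_cast hnpos)]
    have : (n * A.card : ℚ) ≤ (indepNum G * N.card : ℚ) := by exact_mod_cast hfinal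
    push_cast at this ⊢
    linarith
end

section
/- Let G be a vertex-transitive graph and A an independent set of G. Then |A| + (α(G)/|V(G)|)·|V(G) \ N[A]| ≤ α(G). Equality holds if and only if A = ∅, or |A| = α(G), or A is an imprimitive independent set (i.e., |A| < α(G) and |A|/|N[A]| = α(G)/|V(G)|). -/
open scoped Classical

open Finset

lemma indep_card_le {V : Type*} [Fintype V] (G : SimpleGraph V) (s : Finset V)
    (hs : ∀ a ∈ s, ∀ b ∈ s, ¬ G.Adj a b) : s.card ≤ indepNum G :=
  Nat.le_findGreatest (by simpa using Finset.card_le_univ s) ⟨s, hs, rfl⟩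

lemma exists_max_indep {V : Type*} [Fintype V] (G : SimpleGraph V) :
    ∃ B : Finset V, (∀ a ∈ B, ∀ b ∈ B, ¬ G.Adj a b) ∧ B.card = indepNum G :=
  Nat.findGreatest_spec (P := fun m => ∃ s : Finset V, (∀ a ∈ s, ∀ b ∈ s, ¬ G.Adj a b) ∧ s.card = m)
    (Nat.zero_le _) ⟨∅, by simp, by simp⟩

lemma key_ineq {V : Type*} [Fintype V] [Nonempty V] (G : SimpleGraph V)
    (htrans : ∀ u v : V, ∃ e : G ≃g G, e u = v)
    (A : Finset V) (hA : ∀ a ∈ A, ∀ b ∈ A, ¬ G.Adj a b) :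
    Fintype.card V * A.card ≤ indepNum G * (closedNbhd G A).card := by
  classical
  obtain ⟨B, hBind, hBcard⟩ := exists_max_indep G
  set N := closedNbhd G A with hN
  set S : Finset (V ≃ V) := univ.filter (fun g => ∀ a b : V, G.Adj (g a) (g b) ↔ G.Adj a b)
    with hS
  have hmemS : ∀ g : V ≃ V, g ∈ S ↔ ∀ a b : V, G.Adj (g a) (g b) ↔ G.Adj a b := by
    intro g; simp [hS]
  -- closure properties
  have htransS : ∀ g h : V ≃ V, g ∈ S → h ∈ S → g.trans h ∈ S := by
    intro g h hg hh
    rw [hmemS] at *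
    intro a b
    simp only [Equiv.trans_apply]
    rw [hh, hg]
  have hid : Equiv.refl V ∈ S := by rw [hmemS]; intro a b; simp
  have hiso : ∀ e : G ≃g G, e.toEquiv ∈ S := by
    intro e; rw [hmemS]; intro a b; exact e.map_rel_iff
  -- fibers
  set T : V → V → Finset (V ≃ V) := fun b w => S.filter (fun g => g b = w) with hT
  have hsymmS : ∀ g : V ≃ V, g ∈ S → g.symm ∈ S := by
    intro g hg
    rw [hmemS] at *
    intro a b
    have := (hg (g.symm a) (g.symm b)).symm
    simpa using this
  have hTcard : ∀ b w b' w' : V, (T b w).card = (T b' w').card := by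
    intro b w b' w'
    obtain ⟨h0, hh0⟩ := htrans b' b
    obtain ⟨k0, hk0⟩ := htrans w w'
    set h : V ≃ V := h0.toEquiv with hhdef
    set k : V ≃ V := k0.toEquiv with hkdef
    have hh : h b' = b := hh0
    have hk : k w = w' := hk0
    have hmh : h ∈ S := hiso h0
    have hmk : k ∈ S := hiso k0
    apply Finset.card_bij' (fun g _ => (h.trans g).trans k)
      (fun g _ => (h.symm.trans g).trans k.symm)
    · intro g hg
      simp only [hT, mem_filter] at hg ⊢
      refine ⟨htransS _ _ (htransS _ _ hmh hg.1) hmk, ?_⟩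
      simp only [Equiv.trans_apply, hh, hg.2, hk]
    · intro g hg
      simp only [hT, mem_filter] at hg ⊢
      refine ⟨htransS _ _ (htransS _ _ (hsymmS h hmh) hg.1) (hsymmS k hmk), ?_⟩
      have e1 : h.symm b = b' := by rw [← hh]; exact h.symm_apply_apply b'
      simp only [Equiv.trans_apply, e1, hg.2, ← hk]
      exact k.symm_apply_apply w
    · intro g hg; ext x; simp
    · intro g hg; ext x; simp
  set c : ℕ := (T (Classical.arbitrary V) (Classical.arbitrary V)).card with hc
  have hScard : ∀ b : V, S.card = Fintype.card V * c := by
    intro b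
    have := Finset.card_eq_sum_card_fiberwise
      (f := fun g : V ≃ V => g b) (s := S) (t := univ) (fun x _ => mem_univ _)
    rw [this]
    have : ∀ w : V, (S.filter fun g => g b = w).card = c := by
      intro w; exact hTcard b w _ _
    simp only [this, sum_const, card_univ, smul_eq_mul]
  have hSpos : 0 < S.card := Finset.card_pos.2 ⟨Equiv.refl V, hid⟩
  have hcpos : 0 < c := by
    by_contra h
    have : c = 0 := by omega
    rw [hScard (Classical.arbitrary V), this, mul_zero] at hSpos
    exact absurd hSpos (lt_irrefl 0)
  -- per-element inequality
  have hsub : A ⊆ N := Finset.subset_union_left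
  have per_g : ∀ g ∈ S,
      A.card + B.card ≤ indepNum G + ((B.map g.toEmbedding) ∩ N).card := by
    intro g hg
    rw [hmemS] at hg
    set Bg := B.map g.toEmbedding with hBg
    have hBgind : ∀ a ∈ Bg, ∀ b ∈ Bg, ¬ G.Adj a b := by
      intro a ha b hb
      simp only [hBg, mem_map, Equiv.coe_toEmbedding] at ha hb
      obtain ⟨a', ha', rfl⟩ := ha
      obtain ⟨b', hb', rfl⟩ := hb
      rw [hg]
      exact hBind a' ha' b' hb'
    have hCind : ∀ a ∈ A ∪ (Bg \ N), ∀ b ∈ A ∪ (Bg \ N), ¬ G.Adj a b := by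
      intro a ha b hb
      rw [mem_union] at ha hb
      rcases ha with ha | ha <;> rcases hb with hb | hb
      · exact hA a ha b hb
      · rw [mem_sdiff] at hb
        intro hadj
        exact hb.2 (by simp [hN, closedNbhd]; right; exact ⟨a, ha, hadj⟩)
      · rw [mem_sdiff] at ha
        intro hadj
        exact ha.2 (by simp [hN, closedNbhd]; right; exact ⟨b, hb, hadj.symm⟩)
      · exact hBgind a (mem_sdiff.1 ha).1 b (mem_sdiff.1 hb).1
    have hdisj : Disjoint A (Bg \ N) := by
      apply Finset.disjoint_left.2
      intro x hx hx2
      exact (mem_sdiff.1 hx2).2 (hsub hx)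
    have hCcard : (A ∪ (Bg \ N)).card = A.card + (Bg \ N).card :=
      Finset.card_union_of_disjoint hdisj
    have hle := indep_card_le G _ hCind
    rw [hCcard] at hle
    have hsplit : (Bg \ N).card + (Bg ∩ N).card = Bg.card := by
      rw [Finset.card_sdiff_add_card_inter]
    have hBgcard : Bg.card = B.card := Finset.card_map _
    omega
  -- sum over S
  have hsum : ∑ g ∈ S, ((B.map g.toEmbedding) ∩ N).card = N.card * B.card * c := by
    have step1 : ∀ g : V ≃ V, ((B.map g.toEmbedding) ∩ N).card
        = (N.filter (fun w => g.symm w ∈ B)).card := by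
      intro g
      congr 1
      ext w
      simp [Finset.mem_map_equiv, and_comm]
    have step2 : ∀ w : V, (S.filter (fun g => g.symm w ∈ B)).card
        = ∑ b ∈ B, (T b w).card := by
      intro w
      rw [Finset.card_eq_sum_card_fiberwise
        (f := fun g : V ≃ V => g.symm w) (s := S.filter (fun g => g.symm w ∈ B)) (t := B) (fun g hg => (mem_filter.1 hg).2)]
      apply Finset.sum_congr rfl
      intro b hb
      congr 1
      rw [Finset.filter_filter]
      apply Finset.filter_congr
      intro g hg
      constructor
      · rintro ⟨_, h2⟩
        rw [← h2]; exact g.apply_symm_apply w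
      · intro h2
        have hb' : g.symm w = b := by rw [← h2]; exact g.symm_apply_apply b
        exact ⟨hb' ▸ hb, hb'⟩
    calc ∑ g ∈ S, ((B.map g.toEmbedding) ∩ N).card
        = ∑ g ∈ S, ∑ w ∈ N, (if g.symm w ∈ B then 1 else 0) := by
          apply Finset.sum_congr rfl; intro g _
          rw [step1, Finset.card_filter]
      _ = ∑ w ∈ N, ∑ g ∈ S, (if g.symm w ∈ B then 1 else 0) := Finset.sum_comm
      _ = ∑ w ∈ N, (S.filter (fun g => g.symm w ∈ B)).card := by
          apply Finset.sum_congr rfl; intro w _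
          rw [Finset.card_filter]
      _ = ∑ w ∈ N, ∑ b ∈ B, (T b w).card := by
          apply Finset.sum_congr rfl; intro w _; exact step2 w
      _ = ∑ w ∈ N, ∑ b ∈ B, c := by
          apply Finset.sum_congr rfl; intro w _
          apply Finset.sum_congr rfl; intro b _
          exact hTcard b w _ _
      _ = N.card * B.card * c := by simp [mul_assoc]
  -- combine
  have total : S.card * (A.card + B.card) ≤ S.card * indepNum G + N.card * B.card * c := by
    calc S.card * (A.card + B.card) = ∑ _g ∈ S, (A.card + B.card) := by
          simp [mul_comm]
      _ ≤ ∑ g ∈ S, (indepNum G + ((B.map g.toEmbedding) ∩ N).card) :=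
          Finset.sum_le_sum per_g
      _ = S.card * indepNum G + ∑ g ∈ S, ((B.map g.toEmbedding) ∩ N).card := by
          rw [Finset.sum_add_distrib]; simp [mul_comm]
      _ = S.card * indepNum G + N.card * B.card * c := by rw [hsum]
  rw [hScard (Classical.arbitrary V), hBcard] at total
  have e1 : Fintype.card V * c * (A.card + indepNum G)
      = Fintype.card V * c * A.card + Fintype.card V * c * indepNum G := by ring
  rw [e1] at total
  have h4 : Fintype.card V * c * A.card ≤ N.card * indepNum G * c := by omega
  have h5 : Fintype.card V * A.card * c ≤ indepNum G * N.card * c := by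
    calc Fintype.card V * A.card * c = Fintype.card V * c * A.card := by ring
      _ ≤ N.card * indepNum G * c := h4
      _ = indepNum G * N.card * c := by ring
  exact Nat.le_of_mul_le_mul_right h5 hcpos

lemma max_dominates {V : Type*} [Fintype V] (G : SimpleGraph V)
    (A : Finset V) (hA : ∀ a ∈ A, ∀ b ∈ A, ¬ G.Adj a b)
    (hcard : A.card = indepNum G) : closedNbhd G A = univ := by
  by_contra hne
  rw [Finset.eq_univ_iff_forall] at hne
  push_neg at hne
  obtain ⟨v, hv⟩ := hne
  have hvA : v ∉ A := fun h => hv (Finset.mem_union_left _ h)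
  have hvadj : ∀ a ∈ A, ¬ G.Adj a v := by
    intro a ha hadj
    exact hv (Finset.mem_union_right _ (Finset.mem_filter.2 ⟨mem_univ v, a, ha, hadj⟩))
  have hind : ∀ a ∈ insert v A, ∀ b ∈ insert v A, ¬ G.Adj a b := by
    intro a ha b hb
    rw [Finset.mem_insert] at ha hb
    rcases ha with rfl | ha <;> rcases hb with rfl | hb
    · simp
    · intro h; exact hvadj b hb h.symm
    · exact hvadj a ha
    · exact hA a ha b hb
  have := indep_card_le G _ hind
  rw [Finset.card_insert_of_notMem hvA, hcard] at this
  omega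


theorem stmt6 {V : Type*} [Fintype V] [Nonempty V] (G : SimpleGraph V)
    (htrans : ∀ u v : V, ∃ e : G ≃g G, e u = v)
    (A : Finset V) (hA : ∀ a ∈ A, ∀ b ∈ A, ¬ G.Adj a b) :
    (A.card : ℚ) + (indepNum G : ℚ) / (Fintype.card V : ℚ) *
        ((Finset.univ \ closedNbhd G A).card : ℚ) ≤ (indepNum G : ℚ) ∧
      ((A.card : ℚ) + (indepNum G : ℚ) / (Fintype.card V : ℚ) *
          ((Finset.univ \ closedNbhd G A).card : ℚ) = (indepNum G : ℚ) ↔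
        A = ∅ ∨ A.card = indepNum G ∨
          (A.card < indepNum G ∧
            (A.card : ℚ) / ((closedNbhd G A).card : ℚ) =
              (indepNum G : ℚ) / (Fintype.card V : ℚ))) := by
  classical
  set N := closedNbhd G A with hNdef
  have hsub : A ⊆ N := Finset.subset_union_left
  have hnpos : 0 < Fintype.card V := Fintype.card_pos
  have hnQ : (0:ℚ) < (Fintype.card V : ℚ) := by exact_mod_cast hnpos
  have hNle : N.card ≤ Fintype.card V := by simpa using Finset.card_le_univ N
  have hcompl : ((univ \ N).card : ℚ) = (Fintype.card V : ℚ) - (N.card : ℚ) := by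
    rw [Finset.card_sdiff_of_subset (Finset.subset_univ N), Finset.card_univ, Nat.cast_sub hNle]
  have key : (Fintype.card V : ℚ) * A.card ≤ (indepNum G : ℚ) * N.card := by
    exact_mod_cast key_ineq G htrans A hA
  have hrw : (A.card : ℚ) + (indepNum G : ℚ) / (Fintype.card V : ℚ) * ((univ \ N).card : ℚ)
      = (indepNum G : ℚ) -
        ((indepNum G : ℚ) * N.card - (Fintype.card V : ℚ) * A.card) / (Fintype.card V : ℚ) := by
    rw [hcompl]
    field_simp
    ring
  have hzero : A = ∅ → N = ∅ := by
    intro h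
    simp [hNdef, closedNbhd, h]
  constructor
  · rw [hrw]
    have h0 : (0:ℚ) ≤ ((indepNum G : ℚ) * N.card - (Fintype.card V : ℚ) * A.card)
        / (Fintype.card V : ℚ) := div_nonneg (by linarith) hnQ.le
    linarith
  · rw [hrw, sub_eq_self, div_eq_zero_iff]
    have hiff : ((indepNum G : ℚ) * N.card - (Fintype.card V : ℚ) * A.card = 0
        ∨ (Fintype.card V : ℚ) = 0)
        ↔ (Fintype.card V : ℚ) * A.card = (indepNum G : ℚ) * N.card := by
      constructor
      · rintro (h | h)
        · linarith
        · exact absurd h (ne_of_gt hnQ)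
      · intro h; left; linarith
    rw [hiff]
    constructor
    · intro h
      by_cases hAe : A = ∅
      · exact Or.inl hAe
      by_cases hAc : A.card = indepNum G
      · exact Or.inr (Or.inl hAc)
      refine Or.inr (Or.inr ⟨lt_of_le_of_ne (indep_card_le G A hA) hAc, ?_⟩)
      have hm : (0:ℚ) < (N.card : ℚ) := by
        have h1 : A.Nonempty := Finset.nonempty_iff_ne_empty.2 hAe
        have h2 : 0 < N.card := Finset.card_pos.2 (h1.mono hsub)
        exact_mod_cast h2
      rw [div_eq_div_iff hm.ne' hnQ.ne']
      linarith
    · rintro (hAe | hAc | ⟨-, hfr⟩)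
      · have hN0 : N = ∅ := hzero hAe
        rw [hAe, hN0]
        simp
      · have hNu : N = univ := max_dominates G A hA hAc
        rw [hNu, hAc, Finset.card_univ]
        ring
      · by_cases hAe : A = ∅
        · have hN0 : N = ∅ := hzero hAe
          rw [hAe, hN0]
          simp
        · have hm : (0:ℚ) < (N.card : ℚ) := by
            have h1 : A.Nonempty := Finset.nonempty_iff_ne_empty.2 hAe
            have h2 : 0 < N.card := Finset.card_pos.2 (h1.mono hsub)
            exact_mod_cast h2
          rw [div_eq_div_iff hm.ne' hnQ.ne'] at hfr
          linarith
end

section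
/- Let G(X,Y) be a non-complete bipartite graph and let A, B ⊆ X be fragments in X with A ∩ B ≠ ∅ and N(A ∪ B) ≠ Y. Then both A ∩ B and A ∪ B are fragments in X. -/
open scoped Classical

/-- The neighborhood in `Y` of a set `A ⊆ X` in the bipartite graph with edge
relation `E : X → Y → Prop`. -/
noncomputable def nbhd {X Y : Type*} [Fintype Y] (E : X → Y → Prop) (A : Finset X) :
    Finset Y :=
  Finset.univ.filter (fun y => ∃ a ∈ A, E a y)

/-- `ε(X) = min { |N(A)| - |A| : A ⊆ X, N(A) ≠ Y }`. -/
noncomputable def eps {X Y : Type*} [Fintype X] [Fintype Y] (E : X → Y → Prop) : ℤ :=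
  sInf {d : ℤ | ∃ A : Finset X, nbhd E A ≠ Finset.univ ∧
    d = ((nbhd E A).card : ℤ) - (A.card : ℤ)}

/-- `A ⊆ X` is a fragment if `N(A) ≠ Y` and `|N(A)| - |A| = ε(X)`. -/
noncomputable def IsFragment {X Y : Type*} [Fintype X] [Fintype Y] (E : X → Y → Prop)
    (A : Finset X) : Prop :=
  nbhd E A ≠ Finset.univ ∧ ((nbhd E A).card : ℤ) - (A.card : ℤ) = eps E

theorem stmt13 {X Y : Type*} [Fintype X] [Fintype Y] (E : X → Y → Prop)
    (hnc : ∃ x y, ¬ E x y) (A B : Finset X)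
    (hA : IsFragment E A) (hB : IsFragment E B)
    (hAB : (A ∩ B).Nonempty) (hN : nbhd E (A ∪ B) ≠ Finset.univ) :
    IsFragment E (A ∩ B) ∧ IsFragment E (A ∪ B) := by
  classical
  set S : Set ℤ := {d : ℤ | ∃ C : Finset X, nbhd E C ≠ Finset.univ ∧
    d = ((nbhd E C).card : ℤ) - (C.card : ℤ)} with hS
  have hbdd : BddBelow S := by
    refine ⟨-(Fintype.card X : ℤ), ?_⟩
    rintro d ⟨C, _, rfl⟩
    have h1 : (C.card : ℤ) ≤ (Fintype.card X : ℤ) := by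
      exact_mod_cast Finset.card_le_univ C
    have h2 : (0 : ℤ) ≤ ((nbhd E C).card : ℤ) := by positivity
    linarith
  have heps_le : ∀ d ∈ S, eps E ≤ d := fun d hd => csInf_le hbdd hd
  -- N(A ∪ B) = N(A) ∪ N(B)
  have hunion : nbhd E (A ∪ B) = nbhd E A ∪ nbhd E B := by
    ext y
    simp only [nbhd, Finset.mem_filter, Finset.mem_union, Finset.mem_univ, true_and]
    constructor
    · rintro ⟨a, ha | ha, hE⟩
      · exact Or.inl ⟨a, ha, hE⟩
      · exact Or.inr ⟨a, ha, hE⟩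
    · rintro (⟨a, ha, hE⟩ | ⟨a, ha, hE⟩)
      · exact ⟨a, Or.inl ha, hE⟩
      · exact ⟨a, Or.inr ha, hE⟩
  -- N(A ∩ B) ⊆ N(A) ∩ N(B)
  have hinter : nbhd E (A ∩ B) ⊆ nbhd E A ∩ nbhd E B := by
    intro y hy
    simp only [nbhd, Finset.mem_filter, Finset.mem_univ, true_and, Finset.mem_inter] at *
    obtain ⟨a, ha, hE⟩ := hy
    exact ⟨⟨a, ha.1, hE⟩, ⟨a, ha.2, hE⟩⟩
  have hNAB_ne : nbhd E (A ∩ B) ≠ Finset.univ := by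
    intro h
    apply hA.1
    apply Finset.eq_univ_of_forall
    intro y
    have : y ∈ nbhd E (A ∩ B) := h ▸ Finset.mem_univ y
    exact (Finset.mem_inter.mp (hinter this)).1
  have hdI : ((nbhd E (A ∩ B)).card : ℤ) - ((A ∩ B).card : ℤ) ∈ S := ⟨A ∩ B, hNAB_ne, rfl⟩
  have hdU : ((nbhd E (A ∪ B)).card : ℤ) - ((A ∪ B).card : ℤ) ∈ S := ⟨A ∪ B, hN, rfl⟩
  have h1 := heps_le _ hdI
  have h2 := heps_le _ hdU
  -- cardinality bounds
  have hcardN : (nbhd E (A ∩ B)).card + (nbhd E (A ∪ B)).card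
      ≤ (nbhd E A).card + (nbhd E B).card := by
    have := Finset.card_le_card hinter
    have hue : (nbhd E (A ∪ B)).card = (nbhd E A ∪ nbhd E B).card := by rw [hunion]
    have := Finset.card_inter_add_card_union (nbhd E A) (nbhd E B)
    omega
  have hcardAB : (A ∩ B).card + (A ∪ B).card = A.card + B.card :=
    Finset.card_inter_add_card_union A B
  have hsum : ((nbhd E (A ∩ B)).card : ℤ) - ((A ∩ B).card : ℤ)
      + (((nbhd E (A ∪ B)).card : ℤ) - ((A ∪ B).card : ℤ)) ≤ eps E + eps E := by
    have hA2 := hA.2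
    have hB2 := hB.2
    have hAB' : ((A ∩ B).card : ℤ) + ((A ∪ B).card : ℤ) = (A.card : ℤ) + B.card := by
      exact_mod_cast hcardAB
    have : ((nbhd E (A ∩ B)).card : ℤ) + (nbhd E (A ∪ B)).card
        ≤ (nbhd E A).card + (nbhd E B).card := by exact_mod_cast hcardN
    linarith
  constructor
  · exact ⟨hNAB_ne, by linarith⟩
  · exact ⟨hN, by linarith⟩
end
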